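/- arXiv:2507.14872 — 3 statements merged into one kernel-verified Lean document; each statement's English description precedes it below -/
import Mathlib

section
/- If f : Ω → ℂ is analytic and injective on an open set Ω ⊆ ℂ, then f'(z) ≠ 0 for every z ∈ Ω. -/
open Complex Filter Metric Set Topology

/-- Injective holomorphic functions have nonvanishing derivative. -/
theorem deriv_ne_zero_of_injOn (Ω : Set ℂ) (hΩ : IsOpen Ω) (f : ℂ → ℂ)
    (hf : DifferentiableOn ℂ f Ω) (hinj : Set.InjOn f Ω) :
    ∀ z ∈ Ω, deriv f z ≠ 0 := by
  intro z₀ hz₀ hd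
  have hΩn : Ω ∈ 𝓝 z₀ := hΩ.mem_nhds hz₀
  have hA : AnalyticAt ℂ f z₀ := hf.analyticAt hΩn
  set F : ℂ → ℂ := fun z => f z - f z₀ with hFdef
  have hFA : AnalyticAt ℂ F z₀ := hA.sub analyticAt_const
  -- F is not eventually zero near z₀
  have hne : ¬ ∀ᶠ z in 𝓝 z₀, F z = 0 := by
    intro h
    obtain ⟨r, hr, hball⟩ := Metric.mem_nhds_iff.mp (h.and hΩn)
    have h1 : z₀ + ((r / 2 : ℝ) : ℂ) ∈ ball z₀ r := by
      simp only [Metric.mem_ball, dist_eq, add_sub_cancel_left, Complex.norm_real, Real.norm_eq_abs]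
      rw [abs_of_pos (half_pos hr)]
      linarith
    obtain ⟨hF1, hΩ1⟩ := hball h1
    have h2 : z₀ + ((r / 2 : ℝ) : ℂ) = z₀ := hinj hΩ1 hz₀ (by simpa [F, sub_eq_zero] using hF1)
    have h3 : ((r / 2 : ℝ) : ℂ) = 0 := by
      have := congrArg (· - z₀) h2
      simpa using this
    have h4 : (r / 2 : ℝ) = 0 := by exact_mod_cast h3
    linarith
  -- finite order n
  obtain ⟨n, hn⟩ : ∃ n : ℕ, analyticOrderAt F z₀ = n := by
    cases h : analyticOrderAt F z₀ using ENat.recTopCoe with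
    | top => exact absurd (analyticOrderAt_eq_top.mp h) hne
    | coe n => exact ⟨n, rfl⟩
  obtain ⟨g, hg, hg0, hfg⟩ := (hFA.analyticOrderAt_eq_natCast (n := n)).mp hn
  -- n ≠ 0
  have hF0 : F z₀ = 0 := by simp [F]
  have hn0 : n ≠ 0 := by
    rintro rfl
    have := hfg.self_of_nhds
    simp [hF0] at this
    exact hg0 this.symm
  -- deriv F z₀ = 0
  have hdF : deriv F z₀ = 0 := by
    have : deriv F z₀ = deriv f z₀ := by
      simp [hFdef, deriv_sub_const]
    rw [this, hd]
  -- n ≠ 1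
  have hn1 : n ≠ 1 := by
    rintro rfl
    have hD : HasDerivAt (fun z => (z - z₀) ^ 1 • g z) (g z₀) z₀ := by
      have h1 : HasDerivAt (fun z : ℂ => z - z₀) 1 z₀ := (hasDerivAt_id z₀).sub_const z₀
      have h2 : HasDerivAt g (deriv g z₀) z₀ := hg.differentiableAt.hasDerivAt
      have := h1.fun_mul h2
      simp only [pow_one, smul_eq_mul]
      exact this.congr_deriv (by ring)
    have : deriv F z₀ = g z₀ := by
      rw [Filter.EventuallyEq.deriv_eq hfg]
      exact hD.deriv
    rw [hdF] at this
    exact hg0 this.symm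
  have hn2 : 2 ≤ n := by omega
  have hnC : (n : ℂ) ≠ 0 := Nat.cast_ne_zero.mpr hn0
  -- nth root of g
  set c : ℂ := Complex.exp (Complex.log (g z₀) / n) with hc
  have hc0 : c ≠ 0 := Complex.exp_ne_zero _
  have hcn : c ^ n = g z₀ := by
    rw [hc, ← Complex.exp_nat_mul, mul_div_cancel₀ _ hnC, Complex.exp_log hg0]
  set h : ℂ → ℂ := fun z => c * Complex.exp (Complex.log (g z / g z₀) / n) with hh
  have hhA : AnalyticAt ℂ h z₀ := by
    apply analyticAt_const.mul
    apply (analyticAt_cexp.comp ?_)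
    apply AnalyticAt.div
    · exact (hg.div analyticAt_const (by simpa using hg0)).clog (by
        rw [Pi.div_apply, div_self hg0]; exact Complex.one_mem_slitPlane)
    · exact analyticAt_const
    · exact hnC
  have hhz₀ : h z₀ = c := by
    simp [hh, div_self hg0]
  -- h ^ n = g eventually
  have hgne : ∀ᶠ z in 𝓝 z₀, g z ≠ 0 := hg.continuousAt.eventually_ne hg0
  have key : ∀ x : ℂ, Complex.exp (x / n) ^ n = Complex.exp x := fun x => by
    rw [← Complex.exp_nat_mul, mul_div_cancel₀ _ hnC]
  have hhn : ∀ᶠ z in 𝓝 z₀, h z ^ n = g z := by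
    filter_upwards [hgne] with z hz
    show (c * Complex.exp (Complex.log (g z / g z₀) / n)) ^ n = g z
    rw [mul_pow, hcn, key, Complex.exp_log (div_ne_zero hz hg0)]
    field_simp
  -- φ
  set φ : ℂ → ℂ := fun z => (z - z₀) * h z with hφ
  have hφA : AnalyticAt ℂ φ z₀ := ((analyticAt_id).sub analyticAt_const).mul hhA
  have hφ0 : φ z₀ = 0 := by simp [hφ]
  have hφd : deriv φ z₀ = c := by
    have h1 : HasDerivAt (fun z : ℂ => z - z₀) 1 z₀ := (hasDerivAt_id z₀).sub_const z₀
    have h2 : HasDerivAt h (deriv h z₀) z₀ := hhA.differentiableAt.hasDerivAt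
    have := (h1.fun_mul h2).deriv
    simpa [hhz₀] using this
  -- F = φ ^ n eventually
  have hFφ : ∀ᶠ z in 𝓝 z₀, F z = φ z ^ n := by
    filter_upwards [hfg, hhn] with z h1 h2
    rw [h1, hφ]
    simp only [smul_eq_mul, mul_pow]
    rw [h2]
  -- φ not eventually constant
  have hφnc : ¬ ∀ᶠ z in 𝓝 z₀, φ z = φ z₀ := by
    intro h
    have : deriv φ z₀ = deriv (fun _ => φ z₀) z₀ := Filter.EventuallyEq.deriv_eq h
    simp [hφd] at this
    exact hc0 this
  have hmap : 𝓝 (φ z₀) ≤ Filter.map φ (𝓝 z₀) :=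
    hφA.eventually_constant_or_nhds_le_map_nhds.resolve_left hφnc
  rw [hφ0] at hmap
  -- the neighborhood U
  have hU : {z | F z = φ z ^ n} ∩ Ω ∈ 𝓝 z₀ := Filter.inter_mem hFφ hΩn
  have himg : φ '' ({z | F z = φ z ^ n} ∩ Ω) ∈ 𝓝 (0 : ℂ) := by
    apply hmap
    rw [Filter.mem_map]
    exact Filter.mem_of_superset hU (Set.subset_preimage_image _ _)
  obtain ⟨ε, hε, hballε⟩ := Metric.mem_nhds_iff.mp himg
  -- two points
  set ζ : ℂ := Complex.exp (2 * Real.pi * Complex.I / n) with hζ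
  have hζn : ζ ^ n = 1 := by
    rw [hζ, ← Complex.exp_nat_mul, mul_div_cancel₀ _ hnC, Complex.exp_two_pi_mul_I]
  have hζ1 : ζ ≠ 1 := by
    intro hone
    rw [hζ, Complex.exp_eq_one_iff] at hone
    obtain ⟨k, hk⟩ := hone
    have h2πI : (2 * Real.pi * Complex.I : ℂ) ≠ 0 := by
      simp [Complex.I_ne_zero, Real.pi_ne_zero]
    have hkn : (k : ℂ) * n = 1 := by
      have h2 : (2 * Real.pi * Complex.I / n) * n = (k : ℂ) * (2 * Real.pi * Complex.I) * n := by
        rw [hk]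
      rw [div_mul_cancel₀ _ hnC] at h2
      have h1 : ((k : ℂ) * n - 1) * (2 * Real.pi * Complex.I) = 0 := by
        linear_combination -h2
      rcases mul_eq_zero.mp h1 with h' | h'
      · exact sub_eq_zero.mp h'
      · exact absurd h' h2πI
    have : (k * n : ℤ) = 1 := by exact_mod_cast hkn
    have : (n : ℤ) ≤ 1 := Int.le_of_dvd one_pos ⟨k, by linarith [this]⟩
    omega
  have hζabs : ‖ζ‖ = 1 := by
    rw [hζ, Complex.norm_exp]
    norm_num
  set w : ℂ := ((ε / 2 : ℝ) : ℂ) with hw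
  have hw0 : w ≠ 0 := by
    simp [hw]
    positivity
  have habsw : ‖w‖ = ε / 2 := by
    rw [hw, Complex.norm_real, Real.norm_eq_abs, abs_of_pos (half_pos hε)]
  have hwmem : w ∈ ball (0 : ℂ) ε := by
    rw [Metric.mem_ball, dist_zero_right, habsw]
    linarith
  have hζwmem : ζ * w ∈ ball (0 : ℂ) ε := by
    rw [Metric.mem_ball, dist_zero_right, norm_mul, hζabs, one_mul, habsw]
    linarith
  obtain ⟨a, ⟨haF, haΩ⟩, haw⟩ := hballε hwmem
  obtain ⟨b, ⟨hbF, hbΩ⟩, hbw⟩ := hballε hζwmem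
  have hfab : f a = f b := by
    have h1 : f a - f z₀ = w ^ n := by rw [show f a - f z₀ = F a from rfl, haF, haw]
    have h2 : f b - f z₀ = w ^ n := by
      rw [show f b - f z₀ = F b from rfl, hbF, hbw, mul_pow, hζn, one_mul]
    have := h1.trans h2.symm
    linear_combination this
  have hab : a = b := hinj haΩ hbΩ hfab
  rw [hab, hbw] at haw
  have hz1 : (ζ - 1) * w = 0 := by linear_combination haw
  rcases mul_eq_zero.mp hz1 with h' | h'
  · exact hζ1 (sub_eq_zero.mp h')
  · exact hw0 h'
end

section
/- Let 1 < R₁ and 1 < R₂, and suppose there exists a holomorphic bijection f from the annulus A₁ = {z : 1 < |z| < R₁} onto the annulus A₂ = {z : 1 < |z| < R₂}. Then R₁ = R₂. -/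
open Set Complex Filter Metric Topology

noncomputable section AnnulusProof

def Complex.abs : AbsoluteValue ℂ ℝ := IsAbsoluteValue.toAbsoluteValue (norm : ℂ → ℝ)

lemma Complex.abs_apply (z : ℂ) : Complex.abs z = ‖z‖ := rfl

lemma Complex.norm_eq_abs (z : ℂ) : ‖z‖ = Complex.abs z := rfl

lemma Complex.continuous_abs : Continuous Complex.abs := by
  exact continuous_norm

lemma Complex.abs_ofReal (r : ℝ) : Complex.abs (r : ℂ) = |r| := by
  simp [Complex.abs_apply]

lemma Complex.abs_exp (z : ℂ) : Complex.abs (Complex.exp z) = Real.exp z.re := by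
  simp [Complex.abs_apply, Complex.norm_exp]




/-- open annulus -/
def ann (a b : ℝ) : Set ℂ := {z : ℂ | a < Complex.abs z ∧ Complex.abs z < b}

lemma isOpen_ann (a b : ℝ) : IsOpen (ann a b) :=
  (isOpen_lt continuous_const Complex.continuous_abs).inter
    (isOpen_lt Complex.continuous_abs continuous_const)

lemma mem_ann {a b : ℝ} {z : ℂ} : z ∈ ann a b ↔ a < Complex.abs z ∧ Complex.abs z < b :=
  Iff.rfl

lemma ann_eq_image (a b : ℝ) (ha : 0 < a) (hb : 0 < b) :
    ann a b = Complex.exp '' (Complex.re ⁻¹' Ioo (Real.log a) (Real.log b)) := by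
  ext z
  constructor
  · rintro ⟨hz1, hz2⟩
    have hz0 : z ≠ 0 := by
      intro h; rw [h] at hz1; simp at hz1; linarith
    refine ⟨Complex.log z, ?_, Complex.exp_log hz0⟩
    simp only [mem_preimage, Complex.log_re, mem_Ioo]
    exact ⟨Real.log_lt_log ha hz1, Real.log_lt_log (lt_trans ha hz1) hz2⟩
  · rintro ⟨w, hw, rfl⟩
    simp only [mem_preimage, mem_Ioo] at hw
    have habs : Complex.abs (Complex.exp w) = Real.exp w.re := Complex.abs_exp w
    constructor
    · rw [habs, ← Real.exp_log ha]; exact Real.exp_lt_exp.mpr hw.1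
    · rw [habs, ← Real.exp_log hb]; exact Real.exp_lt_exp.mpr hw.2

lemma isPreconnected_ann (a b : ℝ) (ha : 0 < a) (hb : 0 < b) :
    IsPreconnected (ann a b) := by
  rw [ann_eq_image a b ha hb]
  exact ((convex_Ioo _ _).linear_preimage (Complex.reLm)).isPreconnected.image
    _ Complex.continuous_exp.continuousOn

lemma nonempty_ann {a b : ℝ} (ha : 0 < a) (hab : a < b) : (ann a b).Nonempty := by
  have hb : 0 < b := ha.trans hab
  have habs : Complex.abs ((Real.sqrt (a*b) : ℝ) : ℂ) = Real.sqrt (a*b) := by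
    rw [Complex.abs_ofReal, _root_.abs_of_nonneg (Real.sqrt_nonneg _)]
  refine ⟨((Real.sqrt (a*b) : ℝ) : ℂ), ?_, ?_⟩
  · rw [habs]
    have : a = Real.sqrt (a*a) := (Real.sqrt_mul_self ha.le).symm
    rw [this]
    exact Real.sqrt_lt_sqrt (by nlinarith) (by nlinarith)
  · rw [habs]
    have : b = Real.sqrt (b*b) := (Real.sqrt_mul_self hb.le).symm
    nth_rewrite 2 [this]
    exact Real.sqrt_lt_sqrt (by nlinarith) (by nlinarith)





-- slit annulus
def sann (a b : ℝ) : Set ℂ := ann a b ∩ Complex.slitPlane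

lemma sann_eq_image (a b : ℝ) (ha : 0 < a) (hb : 0 < b) :
    sann a b = Complex.exp ''
      {w : ℂ | w.re ∈ Ioo (Real.log a) (Real.log b) ∧ w.im ∈ Ioo (-Real.pi) Real.pi} := by
  ext z
  constructor
  · rintro ⟨⟨hz1, hz2⟩, hsl⟩
    have hz0 : z ≠ 0 := Complex.slitPlane_ne_zero hsl
    refine ⟨Complex.log z, ⟨?_, ?_⟩, Complex.exp_log hz0⟩
    · simp only [Complex.log_re, mem_Ioo]
      exact ⟨Real.log_lt_log ha hz1, Real.log_lt_log (lt_trans ha hz1) hz2⟩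
    · simp only [Complex.log_im, mem_Ioo]
      refine ⟨Complex.neg_pi_lt_arg z, lt_of_le_of_ne (Complex.arg_le_pi z) ?_⟩
      intro hpi
      rw [Complex.arg_eq_pi_iff] at hpi
      rcases hsl with h | h
      · exact absurd hpi.1 (not_lt.mpr h.le)
      · exact h hpi.2
  · rintro ⟨w, ⟨hre, him⟩, rfl⟩
    simp only [mem_Ioo] at hre him
    have habs : Complex.abs (Complex.exp w) = Real.exp w.re := Complex.abs_exp w
    refine ⟨⟨?_, ?_⟩, ?_⟩
    · rw [habs, ← Real.exp_log ha]; exact Real.exp_lt_exp.mpr hre.1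
    · rw [habs, ← Real.exp_log hb]; exact Real.exp_lt_exp.mpr hre.2
    · -- exp w ∈ slitPlane
      rw [Complex.mem_slitPlane_iff]
      rw [Complex.exp_re, Complex.exp_im]
      rcases eq_or_ne w.im 0 with h0 | h0
      · left; rw [h0]; simp [Real.exp_pos]
      · right
        have : Real.sin w.im ≠ 0 := by
          intro hs
          rcases Real.sin_eq_zero_iff.mp hs with ⟨n, hn⟩
          have hpi := Real.pi_pos
          have h1 : (-1:ℝ) < (n:ℝ) := by nlinarith [him.1, him.2]
          have h2 : ((n:ℝ)) < 1 := by nlinarith [him.1, him.2]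
          have h1' : (-1:ℤ) < n := by exact_mod_cast h1
          have h2' : (n:ℤ) < 1 := by exact_mod_cast h2
          have hn0 : n = 0 := by omega
          rw [hn0] at hn
          simp at hn
          exact h0 hn.symm
        positivity


lemma isPreconnected_sann (a b : ℝ) (ha : 0 < a) (hb : 0 < b) :
    IsPreconnected (sann a b) := by
  rw [sann_eq_image a b ha hb]
  have hconv : Convex ℝ {w : ℂ | w.re ∈ Ioo (Real.log a) (Real.log b)
      ∧ w.im ∈ Ioo (-Real.pi) Real.pi} := by
    have : {w : ℂ | w.re ∈ Ioo (Real.log a) (Real.log b) ∧ w.im ∈ Ioo (-Real.pi) Real.pi}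
        = (Complex.reLm ⁻¹' Ioo (Real.log a) (Real.log b)) ∩
          (Complex.imLm ⁻¹' Ioo (-Real.pi) Real.pi) := rfl
    rw [this]
    exact ((convex_Ioo _ _).linear_preimage _).inter ((convex_Ioo _ _).linear_preimage _)
  exact hconv.isPreconnected.image _ Complex.continuous_exp.continuousOn

lemma isOpen_sann (a b : ℝ) : IsOpen (sann a b) :=
  (isOpen_ann a b).inter Complex.isOpen_slitPlane



lemma three_circles {R : ℝ} {g : ℂ → ℂ}
    (hg : DifferentiableOn ℂ g (ann 1 R)) {B : ℝ}
    (hB : ∀ z ∈ ann 1 R, Complex.abs (g z) ≤ B)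
    {r₁ r₂ a b : ℝ} (h1 : 1 < r₁) (h12 : r₁ < r₂) (h2 : r₂ < R)
    (ha : ∀ z ∈ ann 1 R, Complex.abs z = r₁ → Complex.abs (g z) ≤ a)
    (hbb : ∀ z ∈ ann 1 R, Complex.abs z = r₂ → Complex.abs (g z) ≤ b)
    {z : ℂ} (hz : z ∈ ann 1 R) (hz1 : r₁ ≤ Complex.abs z) (hz2 : Complex.abs z ≤ r₂) :
    Complex.abs (g z) ≤
      a ^ (1 - (Real.log (Complex.abs z) - Real.log r₁)/(Real.log r₂ - Real.log r₁))
      * b ^ ((Real.log (Complex.abs z) - Real.log r₁)/(Real.log r₂ - Real.log r₁)) := by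
  set c : ℝ := Real.log r₁ with hc
  set d : ℝ := Real.log r₂ - Real.log r₁ with hd
  have hr₁0 : (0:ℝ) < r₁ := by linarith
  have hr₂0 : (0:ℝ) < r₂ := by linarith
  have hd0 : 0 < d := by
    rw [hd]; have := Real.log_lt_log hr₁0 h12; linarith
  set E : ℂ → ℂ := fun ζ => Complex.exp (c + ζ * d) with hE
  have habsE : ∀ ζ : ℂ, Complex.abs (E ζ) = Real.exp (c + ζ.re * d) := by
    intro ζ
    rw [hE]
    simp only [Complex.abs_exp]
    congr 1
    simp [Complex.add_re, Complex.mul_re, Complex.ofReal_re, Complex.ofReal_im]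
  have hmap : ∀ ζ : ℂ, ζ.re ∈ Icc (0:ℝ) 1 → E ζ ∈ ann 1 R ∧
      r₁ ≤ Complex.abs (E ζ) ∧ Complex.abs (E ζ) ≤ r₂ := by
    intro ζ hζ
    have hkey := habsE ζ
    have hlow : r₁ ≤ Real.exp (c + ζ.re * d) := by
      rw [show r₁ = Real.exp (Real.log r₁) from (Real.exp_log hr₁0).symm]
      apply Real.exp_le_exp.mpr
      nlinarith [hζ.1, hd0]
    have hhigh : Real.exp (c + ζ.re * d) ≤ r₂ := by
      have hcd : c + d = Real.log r₂ := by rw [hc, hd]; ring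
      rw [show r₂ = Real.exp (Real.log r₂) from (Real.exp_log hr₂0).symm]
      apply Real.exp_le_exp.mpr
      nlinarith [hζ.2, hd0]
    exact ⟨⟨by rw [hkey]; linarith, by rw [hkey]; linarith⟩,
      by rw [hkey]; linarith, by rw [hkey]; linarith⟩
  set F : ℂ → ℂ := fun ζ => g (E ζ) with hF
  have hEdiff : Differentiable ℂ E := by
    rw [hE]
    exact (Complex.differentiable_exp.comp
      ((differentiable_const _).add (differentiable_id.mul (differentiable_const _))))
  have hdF : DiffContOnCl ℂ F (Complex.HadamardThreeLines.verticalStrip 0 1) := by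
    constructor
    · apply hg.comp hEdiff.differentiableOn
      intro ζ hζ
      exact (hmap ζ ⟨le_of_lt hζ.1, le_of_lt hζ.2⟩).1
    · apply ContinuousOn.mono (s := Complex.HadamardThreeLines.verticalClosedStrip 0 1)
      · apply hg.continuousOn.comp hEdiff.continuous.continuousOn
        intro ζ hζ
        exact (hmap ζ hζ).1
      · rw [Complex.HadamardThreeLines.verticalStrip,
          Complex.HadamardThreeLines.verticalClosedStrip]
        refine (Complex.continuous_re.closure_preimage_subset _).trans ?_
        rw [closure_Ioo (zero_ne_one)]
  have hBdd : BddAbove ((norm ∘ F) ''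
      (Complex.HadamardThreeLines.verticalClosedStrip 0 1)) := by
    refine ⟨B, ?_⟩
    rintro y ⟨ζ, hζ, rfl⟩
    exact hB _ (hmap ζ hζ).1
  have hedge0 : ∀ ζ : ℂ, ζ ∈ Complex.re ⁻¹' {(0:ℝ)} → ‖F ζ‖ ≤ a := by
    intro ζ hζ
    have hζ0 : ζ.re = 0 := hζ
    apply ha _ (hmap ζ (by rw [hζ0]; exact ⟨le_refl _, zero_le_one⟩)).1
    rw [habsE, hζ0]
    simp [hc, Real.exp_log hr₁0]
  have hedge1 : ∀ ζ : ℂ, ζ ∈ Complex.re ⁻¹' {(1:ℝ)} → ‖F ζ‖ ≤ b := by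
    intro ζ hζ
    have hζ1 : ζ.re = 1 := hζ
    apply hbb _ (hmap ζ (by rw [hζ1]; exact ⟨zero_le_one, le_refl _⟩)).1
    rw [habsE, hζ1]
    rw [show c + 1 * d = Real.log r₂ by rw [hc, hd]; ring, Real.exp_log hr₂0]
  -- the lift of z
  have hz0 : z ≠ 0 := by
    intro h; rw [h] at hz; simp [ann] at hz; linarith [hz.1]
  set t : ℝ := (Real.log (Complex.abs z) - c) / d with ht
  set ζ₀ : ℂ := (t : ℝ) + ((z.arg / d : ℝ)) * Complex.I with hζ₀
  have hre : ζ₀.re = t := by rw [hζ₀]; simp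
  have hret : ζ₀.re ∈ Icc (0:ℝ) 1 := by
    rw [hre, ht]
    constructor
    · apply div_nonneg _ hd0.le
      have := Real.log_le_log hr₁0 hz1
      rw [hc]; linarith
    · rw [div_le_one hd0]
      have := Real.log_le_log (lt_of_lt_of_le hr₁0 hz1) hz2
      rw [hc, hd]; linarith
  have hEζ₀ : E ζ₀ = z := by
    rw [hE]
    have : (c:ℂ) + ζ₀ * d = Complex.log z := by
      rw [hζ₀, ht, Complex.log]
      push_cast
      have hdne : (d:ℂ) ≠ 0 := by exact_mod_cast hd0.ne'
      field_simp
      rw [Complex.abs_apply]; ring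
    show Complex.exp ((c:ℂ) + ζ₀ * d) = z
    rw [this, Complex.exp_log hz0]
  have := Complex.HadamardThreeLines.norm_le_interp_of_mem_verticalClosedStrip₀₁' F
    (z := ζ₀) (a := a) (b := b) hret hdF hBdd hedge0 hedge1
  rw [hre] at this
  have hFζ₀ : F ζ₀ = g z := by show g (E ζ₀) = g z; rw [hEζ₀]
  rw [hFζ₀] at this
  exact this



lemma f_open_map {R₁ : ℝ} {f : ℂ → ℂ} (h₁ : 1 < R₁)
    (hf : DifferentiableOn ℂ f (ann 1 R₁)) (hinj : Set.InjOn f (ann 1 R₁)) :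
    ∀ s ⊆ ann 1 R₁, IsOpen s → IsOpen (f '' s) := by
  have han : AnalyticOnNhd ℂ f (ann 1 R₁) := hf.analyticOnNhd (isOpen_ann 1 R₁)
  rcases han.is_constant_or_isOpen (isPreconnected_ann 1 R₁ one_pos (by linarith)) with hc | ho
  · exfalso
    obtain ⟨w, hw⟩ := hc
    set z₀ : ℂ := (((1+R₁)/2 : ℝ) : ℂ) with hz₀
    have habs : Complex.abs z₀ = (1+R₁)/2 := by
      rw [hz₀, Complex.abs_ofReal, abs_of_pos (by linarith)]
    have hmem : z₀ ∈ ann 1 R₁ := ⟨by rw [habs]; linarith, by rw [habs]; linarith⟩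
    have hmem' : -z₀ ∈ ann 1 R₁ := by
      constructor <;> rw [map_neg_eq_map, habs] <;> linarith
    have : z₀ = -z₀ := hinj hmem hmem' (by rw [hw z₀ hmem, hw (-z₀) hmem'])
    have : z₀ = 0 := by
      have h2 : (2:ℂ) ≠ 0 := two_ne_zero
      linear_combination this/2
    rw [hz₀] at this
    have : ((1+R₁)/2 : ℝ) = 0 := by exact_mod_cast this
    linarith
  · exact ho

lemma proper_aux {R₁ R₂ : ℝ} {f : ℂ → ℂ} (h₁ : 1 < R₁)
    (hf : DifferentiableOn ℂ f (ann 1 R₁))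
    (hbij : Set.BijOn f (ann 1 R₁) (ann 1 R₂))
    {K : Set ℂ} (hK : IsCompact K) (hKA : K ⊆ ann 1 R₂) :
    IsCompact (ann 1 R₁ ∩ f ⁻¹' K) := by
  set A₁ := ann 1 R₁ with hA₁
  set C := A₁ ∩ f ⁻¹' K with hC
  have homap := f_open_map h₁ hf hbij.injOn
  have hCbd : Bornology.IsBounded C := by
    apply (Metric.isBounded_closedBall (x := (0:ℂ)) (r := R₁)).subset
    intro z hz
    rw [Metric.mem_closedBall]
    simp only [dist_zero_right]
    exact le_of_lt hz.1.2
  apply Metric.isCompact_of_isClosed_isBounded _ hCbd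
  rw [← closure_subset_iff_isClosed]
  intro z hzcl
  by_cases hzA : z ∈ A₁
  · -- continuity case
    have hct : ContinuousWithinAt f C z := by
      have : ContinuousAt f z := (hf.continuousOn.continuousAt
        ((isOpen_ann 1 R₁).mem_nhds hzA))
      exact this.continuousWithinAt
    have : f z ∈ closure (f '' C) := hct.mem_closure_image hzcl
    have hfz : f z ∈ K := by
      apply hK.isClosed.closure_subset_iff.mpr ?_ this
      rintro y ⟨u, hu, rfl⟩
      exact hu.2
    exact ⟨hzA, hfz⟩
  · exfalso
    have hne : (𝓝 z ⊓ 𝓟 C).NeBot := mem_closure_iff_clusterPt.mp hzcl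
    have hle : map f (𝓝 z ⊓ 𝓟 C) ≤ 𝓟 K := by
      refine le_trans (map_mono inf_le_right) ?_
      rw [map_principal]
      exact principal_mono.mpr (by rintro y ⟨u, hu, rfl⟩; exact hu.2)
    obtain ⟨w, hwK, hwcl⟩ := hK.exists_clusterPt hle
    obtain ⟨z', hz'A, hz'w⟩ := hbij.surjOn (hKA hwK)
    have hzz' : z ≠ z' := fun h => hzA (h ▸ hz'A)
    obtain ⟨ρ₀, hρ₀, hball₀⟩ := Metric.isOpen_iff.mp (isOpen_ann 1 R₁) z' hz'A
    set ρ : ℝ := min (dist z z' / 2) ρ₀ with hρ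
    have hρpos : 0 < ρ := lt_min (half_pos (dist_pos.mpr hzz')) hρ₀
    have hballA : Metric.ball z' ρ ⊆ A₁ := (Metric.ball_subset_ball (min_le_right _ _)).trans hball₀
    have hVopen : IsOpen (f '' Metric.ball z' ρ) := homap _ hballA Metric.isOpen_ball
    have hwV : f z' ∈ f '' Metric.ball z' ρ :=
      ⟨z', Metric.mem_ball_self hρpos, rfl⟩
    have hVmem : f '' Metric.ball z' ρ ∈ 𝓝 w := by
      rw [← hz'w]
      exact hVopen.mem_nhds hwV
    -- z ∈ closure (ball z' ρ)
    have hzclball : z ∈ closure (Metric.ball z' ρ) := by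
      rw [mem_closure_iff_nhds]
      intro U hU
      have hUC : U ∩ C ∈ 𝓝 z ⊓ 𝓟 C := inter_mem_inf hU (mem_principal_self C)
      have himg : f '' (U ∩ C) ∈ map f (𝓝 z ⊓ 𝓟 C) := image_mem_map hUC
      obtain ⟨y, hy1, hy2⟩ := clusterPt_iff_nonempty.mp hwcl hVmem himg
      obtain ⟨u, huUC, hufy⟩ := hy2
      obtain ⟨v, hvball, hvfy⟩ := hy1
      have : u = v := hbij.injOn (huUC.2.1) (hballA hvball) (by rw [hufy, hvfy])
      exact ⟨u, huUC.1, this ▸ hvball⟩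
    have : dist z z' ≤ ρ := by
      have := Metric.closure_ball_subset_closedBall hzclball
      rwa [Metric.mem_closedBall] at this
    have : dist z z' ≤ dist z z' / 2 := le_trans this (min_le_left _ _)
    have hd0 : 0 < dist z z' := dist_pos.mpr hzz'
    linarith



lemma escape {R₁ R₂ : ℝ} {f : ℂ → ℂ} (h₁ : 1 < R₁) (h₂ : 1 < R₂)
    (hf : DifferentiableOn ℂ f (ann 1 R₁))
    (hbij : Set.BijOn f (ann 1 R₁) (ann 1 R₂))
    {δ : ℝ} (hδ : 0 < δ) :
    ∃ ε, 0 < ε ∧ ε < (R₁ - 1)/2 ∧ ∀ z ∈ ann 1 R₁,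
      (Complex.abs z < 1 + ε ∨ R₁ - ε < Complex.abs z) →
      (Complex.abs (f z) < 1 + δ ∨ R₂ - δ < Complex.abs (f z)) := by
  set K : Set ℂ := {w : ℂ | 1 + δ ≤ Complex.abs w ∧ Complex.abs w ≤ R₂ - δ} with hKdef
  have hKclosed : IsClosed K := by
    apply IsClosed.inter
    · exact isClosed_le continuous_const Complex.continuous_abs
    · exact isClosed_le Complex.continuous_abs continuous_const
  have hKbd : Bornology.IsBounded K := by
    apply (Metric.isBounded_closedBall (x := (0:ℂ)) (r := R₂)).subset
    intro w hw
    rw [Metric.mem_closedBall, dist_zero_right]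
    have := hw.2
    simp only [Complex.norm_eq_abs]
    linarith
  have hKA : K ⊆ ann 1 R₂ := fun w hw => ⟨by linarith [hw.1], by linarith [hw.2]⟩
  have hC := proper_aux h₁ hf hbij (Metric.isCompact_of_isClosed_isBounded hKclosed hKbd) hKA
  set C := ann 1 R₁ ∩ f ⁻¹' K with hCdef
  -- find ε with collar disjoint from C
  have hgoal : ∃ ε, 0 < ε ∧ ε < (R₁ - 1)/2 ∧ ∀ z ∈ C,
      1 + ε ≤ Complex.abs z ∧ Complex.abs z ≤ R₁ - ε := by
    rcases eq_empty_or_nonempty C with hCe | hCne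
    · exact ⟨(R₁-1)/4, by linarith, by linarith, by rw [hCe]; simp⟩
    · have hdc : ContinuousOn (fun z : ℂ => min (Complex.abs z - 1) (R₁ - Complex.abs z)) C :=
        ((Complex.continuous_abs.sub continuous_const).min
          (continuous_const.sub Complex.continuous_abs)).continuousOn
      obtain ⟨z₀, hz₀C, hz₀min⟩ := hC.exists_isMinOn hCne hdc
      set m := min (Complex.abs z₀ - 1) (R₁ - Complex.abs z₀) with hm
      have hm0 : 0 < m := by
        apply lt_min
        · linarith [hz₀C.1.1]
        · linarith [hz₀C.1.2]
      refine ⟨min (m/2) ((R₁-1)/4), lt_min (by linarith) (by linarith),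
        lt_of_le_of_lt (min_le_right _ _) (by linarith), ?_⟩
      intro z hzC
      have hzm := hz₀min hzC
      simp only [mem_setOf_eq] at hzm
      have h1 : m ≤ Complex.abs z - 1 := le_trans hzm (min_le_left _ _)
      have h2 : m ≤ R₁ - Complex.abs z := le_trans hzm (min_le_right _ _)
      have hle : min (m/2) ((R₁-1)/4) ≤ m/2 := min_le_left _ _
      constructor <;> linarith
  obtain ⟨ε, hε0, hεlt, hεC⟩ := hgoal
  refine ⟨ε, hε0, hεlt, ?_⟩
  intro z hzA hcollar
  by_contra hcon
  push_neg at hcon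
  have hzC : z ∈ C := ⟨hzA, ⟨hcon.1, hcon.2⟩⟩
  obtain ⟨hc1, hc2⟩ := hεC z hzC
  rcases hcollar with h | h <;> linarith



variable {R₁ R₂ : ℝ} {f : ℂ → ℂ}

/-- single-δ dichotomy on the inner collar -/
lemma single_inner (h₁ : 1 < R₁) (h₂ : 1 < R₂)
    (hf : DifferentiableOn ℂ f (ann 1 R₁))
    (hbij : Set.BijOn f (ann 1 R₁) (ann 1 R₂))
    {δ : ℝ} (hδ : 0 < δ) (hδ' : δ < (R₂ - 1)/2) :
    (∃ ε, 0 < ε ∧ ∀ z ∈ ann 1 R₁, Complex.abs z < 1 + ε → Complex.abs (f z) < 1 + δ) ∨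
    (∃ ε, 0 < ε ∧ ∀ z ∈ ann 1 R₁, Complex.abs z < 1 + ε → R₂ - δ < Complex.abs (f z)) := by
  obtain ⟨ε, hε0, hεlt, hesc⟩ := escape h₁ h₂ hf hbij hδ
  have hsub : ann 1 (1+ε) ⊆ ann 1 R₁ := fun z hz => ⟨hz.1, by linarith [hz.2]⟩
  have hpre : IsPreconnected (f '' ann 1 (1+ε)) :=
    (isPreconnected_ann 1 (1+ε) one_pos (by linarith)).image f (hf.continuousOn.mono hsub)
  have hcover : f '' ann 1 (1+ε) ⊆ {w : ℂ | Complex.abs w < 1 + δ}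
      ∪ {w : ℂ | R₂ - δ < Complex.abs w} := by
    rintro y ⟨z, hz, rfl⟩
    exact hesc z (hsub hz) (Or.inl hz.2)
  have hdisj : Disjoint {w : ℂ | Complex.abs w < 1 + δ} {w : ℂ | R₂ - δ < Complex.abs w} := by
    rw [Set.disjoint_left]
    intro w hw1 hw2
    simp only [mem_setOf_eq] at hw1 hw2
    linarith
  rcases hpre.subset_or_subset (isOpen_lt Complex.continuous_abs continuous_const)
      (isOpen_lt continuous_const Complex.continuous_abs) hdisj hcover with hl | hr
  · left; exact ⟨ε, hε0, fun z hz hze => hl ⟨z, ⟨hz.1, hze⟩, rfl⟩⟩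
  · right; exact ⟨ε, hε0, fun z hz hze => hr ⟨z, ⟨hz.1, hze⟩, rfl⟩⟩

/-- single-δ dichotomy on the outer collar -/
lemma single_outer (h₁ : 1 < R₁) (h₂ : 1 < R₂)
    (hf : DifferentiableOn ℂ f (ann 1 R₁))
    (hbij : Set.BijOn f (ann 1 R₁) (ann 1 R₂))
    {δ : ℝ} (hδ : 0 < δ) (hδ' : δ < (R₂ - 1)/2) :
    (∃ ε, 0 < ε ∧ ∀ z ∈ ann 1 R₁, R₁ - ε < Complex.abs z → Complex.abs (f z) < 1 + δ) ∨
    (∃ ε, 0 < ε ∧ ∀ z ∈ ann 1 R₁, R₁ - ε < Complex.abs z → R₂ - δ < Complex.abs (f z)) := by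
  obtain ⟨ε, hε0, hεlt, hesc⟩ := escape h₁ h₂ hf hbij hδ
  have hsub : ann (R₁-ε) R₁ ⊆ ann 1 R₁ := fun z hz => ⟨by linarith [hz.1], hz.2⟩
  have hpre : IsPreconnected (f '' ann (R₁-ε) R₁) :=
    (isPreconnected_ann (R₁-ε) R₁ (by linarith) (by linarith)).image f
      (hf.continuousOn.mono hsub)
  have hcover : f '' ann (R₁-ε) R₁ ⊆ {w : ℂ | Complex.abs w < 1 + δ}
      ∪ {w : ℂ | R₂ - δ < Complex.abs w} := by
    rintro y ⟨z, hz, rfl⟩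
    exact hesc z (hsub hz) (Or.inr hz.1)
  have hdisj : Disjoint {w : ℂ | Complex.abs w < 1 + δ} {w : ℂ | R₂ - δ < Complex.abs w} := by
    rw [Set.disjoint_left]
    intro w hw1 hw2
    simp only [mem_setOf_eq] at hw1 hw2
    linarith
  rcases hpre.subset_or_subset (isOpen_lt Complex.continuous_abs continuous_const)
      (isOpen_lt continuous_const Complex.continuous_abs) hdisj hcover with hl | hr
  · left; exact ⟨ε, hε0, fun z hz hze => hl ⟨z, ⟨hze, hz.2⟩, rfl⟩⟩
  · right; exact ⟨ε, hε0, fun z hz hze => hr ⟨z, ⟨hze, hz.2⟩, rfl⟩⟩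

/-- both collars cannot map to the same boundary component -/
lemma not_both_small (h₁ : 1 < R₁) (h₂ : 1 < R₂)
    (hf : DifferentiableOn ℂ f (ann 1 R₁))
    (hbij : Set.BijOn f (ann 1 R₁) (ann 1 R₂))
    {δ εi εo : ℝ} (hδ : 0 < δ) (hδ' : δ < (R₂-1)/2) (hεi : 0 < εi) (hεo : 0 < εo)
    (hin : ∀ z ∈ ann 1 R₁, Complex.abs z < 1 + εi → Complex.abs (f z) < 1 + δ)
    (hout : ∀ z ∈ ann 1 R₁, R₁ - εo < Complex.abs z → Complex.abs (f z) < 1 + δ) :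
    False := by
  set ε : ℝ := min (min εi εo) ((R₁-1)/2) with hε
  have hε0 : 0 < ε := lt_min (lt_min hεi hεo) (by linarith)
  set Cmid : Set ℂ := {z : ℂ | 1 + ε ≤ Complex.abs z ∧ Complex.abs z ≤ R₁ - ε} with hCmid
  have hCcompact : IsCompact Cmid := by
    apply Metric.isCompact_of_isClosed_isBounded
    · exact (isClosed_le continuous_const Complex.continuous_abs).inter
        (isClosed_le Complex.continuous_abs continuous_const)
    · apply (Metric.isBounded_closedBall (x := (0:ℂ)) (r := R₁)).subset
      intro w hw
      rw [Metric.mem_closedBall, dist_zero_right]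
      simp only [Complex.norm_eq_abs]
      linarith [hw.2, hε0]
  have hCsub : Cmid ⊆ ann 1 R₁ := fun z hz => ⟨by linarith [hz.1], by linarith [hz.2]⟩
  -- bound on the image of Cmid
  have hbound : ∃ B, B < R₂ ∧ 1 + δ ≤ B ∧ ∀ z ∈ Cmid, Complex.abs (f z) ≤ B := by
    rcases eq_empty_or_nonempty Cmid with he | hne
    · exact ⟨1 + δ, by linarith, le_refl _, by rw [he]; simp⟩
    · obtain ⟨z₀, hz₀, hmax⟩ := hCcompact.exists_isMaxOn hne
        ((Complex.continuous_abs.comp_continuousOn (hf.continuousOn.mono hCsub)))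
      refine ⟨max (Complex.abs (f z₀)) (1 + δ), ?_, le_max_right _ _, ?_⟩
      · apply max_lt
        · exact (hbij.mapsTo (hCsub hz₀)).2
        · linarith
      · intro z hz
        exact le_trans (hmax hz) (le_max_left _ _)
  obtain ⟨B, hBR, hBδ, hB⟩ := hbound
  -- pick a target of large modulus
  set w₀ : ℂ := (((B + R₂)/2 : ℝ) : ℂ) with hw₀
  have habsw₀ : Complex.abs w₀ = (B + R₂)/2 := by
    rw [hw₀, Complex.abs_ofReal, abs_of_pos (by linarith)]
  have hw₀A : w₀ ∈ ann 1 R₂ := ⟨by rw [habsw₀]; linarith, by rw [habsw₀]; linarith⟩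
  obtain ⟨z₀, hz₀A, hfz₀⟩ := hbij.surjOn hw₀A
  have hfz₀abs : Complex.abs (f z₀) = (B + R₂)/2 := by rw [hfz₀, habsw₀]
  have hnotin : ¬ (Complex.abs z₀ < 1 + ε ∨ R₁ - ε < Complex.abs z₀) := by
    rintro (h | h)
    · have := hin z₀ hz₀A (lt_of_lt_of_le h (by
        have : ε ≤ εi := le_trans (min_le_left _ _) (min_le_left _ _)
        linarith))
      rw [hfz₀abs] at this
      linarith
    · have : ε ≤ εo := le_trans (min_le_left _ _) (min_le_right _ _)
      have := hout z₀ hz₀A (by linarith)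
      rw [hfz₀abs] at this
      linarith
  push_neg at hnotin
  have hz₀C : z₀ ∈ Cmid := ⟨hnotin.1, hnotin.2⟩
  have := hB z₀ hz₀C
  rw [hfz₀abs] at this
  linarith



lemma not_both_large (h₁ : 1 < R₁) (h₂ : 1 < R₂)
    (hf : DifferentiableOn ℂ f (ann 1 R₁))
    (hbij : Set.BijOn f (ann 1 R₁) (ann 1 R₂))
    {δ εi εo : ℝ} (hδ : 0 < δ) (hδ' : δ < (R₂-1)/2) (hεi : 0 < εi) (hεo : 0 < εo)
    (hin : ∀ z ∈ ann 1 R₁, Complex.abs z < 1 + εi → R₂ - δ < Complex.abs (f z))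
    (hout : ∀ z ∈ ann 1 R₁, R₁ - εo < Complex.abs z → R₂ - δ < Complex.abs (f z)) :
    False := by
  set ε : ℝ := min (min εi εo) ((R₁-1)/2) with hε
  have hε0 : 0 < ε := lt_min (lt_min hεi hεo) (by linarith)
  set Cmid : Set ℂ := {z : ℂ | 1 + ε ≤ Complex.abs z ∧ Complex.abs z ≤ R₁ - ε} with hCmid
  have hCcompact : IsCompact Cmid := by
    apply Metric.isCompact_of_isClosed_isBounded
    · exact (isClosed_le continuous_const Complex.continuous_abs).inter
        (isClosed_le Complex.continuous_abs continuous_const)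
    · apply (Metric.isBounded_closedBall (x := (0:ℂ)) (r := R₁)).subset
      intro w hw
      rw [Metric.mem_closedBall, dist_zero_right]
      simp only [Complex.norm_eq_abs]
      linarith [hw.2, hε0]
  have hCsub : Cmid ⊆ ann 1 R₁ := fun z hz => ⟨by linarith [hz.1], by linarith [hz.2]⟩
  have hbound : ∃ B, 1 < B ∧ B ≤ R₂ - δ ∧ ∀ z ∈ Cmid, B ≤ Complex.abs (f z) := by
    rcases eq_empty_or_nonempty Cmid with he | hne
    · exact ⟨R₂ - δ, by linarith, le_refl _, by rw [he]; simp⟩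
    · obtain ⟨z₀, hz₀, hmin⟩ := hCcompact.exists_isMinOn hne
        ((Complex.continuous_abs.comp_continuousOn (hf.continuousOn.mono hCsub)))
      refine ⟨min (Complex.abs (f z₀)) (R₂ - δ), ?_, min_le_right _ _, ?_⟩
      · apply lt_min
        · exact (hbij.mapsTo (hCsub hz₀)).1
        · linarith
      · intro z hz
        exact le_trans (min_le_left _ _) (hmin hz)
  obtain ⟨B, hB1, hBδ, hB⟩ := hbound
  set w₀ : ℂ := (((1 + B)/2 : ℝ) : ℂ) with hw₀
  have habsw₀ : Complex.abs w₀ = (1 + B)/2 := by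
    rw [hw₀, Complex.abs_ofReal, abs_of_pos (by linarith)]
  have hw₀A : w₀ ∈ ann 1 R₂ := ⟨by rw [habsw₀]; linarith, by rw [habsw₀]; linarith⟩
  obtain ⟨z₀, hz₀A, hfz₀⟩ := hbij.surjOn hw₀A
  have hfz₀abs : Complex.abs (f z₀) = (1 + B)/2 := by rw [hfz₀, habsw₀]
  have hnotin : ¬ (Complex.abs z₀ < 1 + ε ∨ R₁ - ε < Complex.abs z₀) := by
    rintro (h | h)
    · have hεi' : ε ≤ εi := le_trans (min_le_left _ _) (min_le_left _ _)
      have := hin z₀ hz₀A (by linarith)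
      rw [hfz₀abs] at this
      linarith
    · have hεo' : ε ≤ εo := le_trans (min_le_left _ _) (min_le_right _ _)
      have := hout z₀ hz₀A (by linarith)
      rw [hfz₀abs] at this
      linarith
  push_neg at hnotin
  have := hB z₀ ⟨hnotin.1, hnotin.2⟩
  rw [hfz₀abs] at this
  linarith

lemma dichotomy (h₁ : 1 < R₁) (h₂ : 1 < R₂)
    (hf : DifferentiableOn ℂ f (ann 1 R₁))
    (hbij : Set.BijOn f (ann 1 R₁) (ann 1 R₂)) :
    ((∀ δ, 0 < δ → ∃ ε, 0 < ε ∧ ∀ z ∈ ann 1 R₁,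
        Complex.abs z < 1 + ε → Complex.abs (f z) < 1 + δ) ∧
      (∀ δ, 0 < δ → ∃ ε, 0 < ε ∧ ∀ z ∈ ann 1 R₁,
        R₁ - ε < Complex.abs z → R₂ - δ < Complex.abs (f z))) ∨
    ((∀ δ, 0 < δ → ∃ ε, 0 < ε ∧ ∀ z ∈ ann 1 R₁,
        Complex.abs z < 1 + ε → R₂ - δ < Complex.abs (f z)) ∧
      (∀ δ, 0 < δ → ∃ ε, 0 < ε ∧ ∀ z ∈ ann 1 R₁,
        R₁ - ε < Complex.abs z → Complex.abs (f z) < 1 + δ)) := by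
  set δ₀ : ℝ := (R₂ - 1)/4 with hδ₀def
  have hδ₀0 : 0 < δ₀ := by rw [hδ₀def]; linarith
  have hδ₀lt : δ₀ < (R₂-1)/2 := by rw [hδ₀def]; linarith
  -- a nonempty inner collar point
  have hinpt : ∀ t : ℝ, 0 < t → ∃ z ∈ ann 1 R₁,
      Complex.abs z < 1 + min t ((R₁-1)/2) := by
    intro t ht
    have hmin0 : 0 < min t ((R₁-1)/2) := lt_min ht (by linarith)
    obtain ⟨z, hz⟩ := nonempty_ann one_pos (by linarith : (1:ℝ) < 1 + min t ((R₁-1)/2))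
    refine ⟨z, ⟨hz.1, ?_⟩, hz.2⟩
    have : min t ((R₁-1)/2) ≤ (R₁-1)/2 := min_le_right _ _
    linarith [hz.2]
  have houtpt : ∀ t : ℝ, 0 < t → ∃ z ∈ ann 1 R₁,
      R₁ - min t ((R₁-1)/2) < Complex.abs z := by
    intro t ht
    have hmin0 : 0 < min t ((R₁-1)/2) := lt_min ht (by linarith)
    have hlb : (0:ℝ) < R₁ - min t ((R₁-1)/2) := by
      have : min t ((R₁-1)/2) ≤ (R₁-1)/2 := min_le_right _ _
      linarith
    obtain ⟨z, hz⟩ := nonempty_ann hlb (by linarith : R₁ - min t ((R₁-1)/2) < R₁)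
    have h1z : 1 < Complex.abs z := by
      have : min t ((R₁-1)/2) ≤ (R₁-1)/2 := min_le_right _ _
      linarith [hz.1]
    exact ⟨z, ⟨h1z, hz.2⟩, hz.1⟩
  rcases single_inner h₁ h₂ hf hbij hδ₀0 hδ₀lt with ⟨εi₀, hεi₀, hPin₀⟩ | ⟨εi₀, hεi₀, hQin₀⟩
  · -- inner maps small
    left
    constructor
    · intro δ hδ
      rcases le_or_gt δ₀ δ with hle | hlt
      · exact ⟨εi₀, hεi₀, fun z hz hze => lt_of_lt_of_le (hPin₀ z hz hze) (by linarith)⟩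
      · rcases single_inner h₁ h₂ hf hbij hδ (by linarith) with ⟨ε, hε, hP⟩ | ⟨ε, hε, hQ⟩
        · exact ⟨ε, hε, hP⟩
        · exfalso
          obtain ⟨z, hzA, hzlt⟩ := hinpt (min εi₀ ε) (lt_min hεi₀ hε)
          have hz1 : Complex.abs z < 1 + εi₀ := by
            have := min_le_left (min εi₀ ε) ((R₁-1)/2)
            have := min_le_left εi₀ ε
            linarith
          have hz2 : Complex.abs z < 1 + ε := by
            have := min_le_left (min εi₀ ε) ((R₁-1)/2)
            have := min_le_right εi₀ ε
            linarith
          have hs := hPin₀ z hzA hz1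
          have hl := hQ z hzA hz2
          rw [hδ₀def] at hs
          linarith
    · -- outer large, all δ
      have hout₀ : ∃ ε, 0 < ε ∧ ∀ z ∈ ann 1 R₁,
          R₁ - ε < Complex.abs z → R₂ - δ₀ < Complex.abs (f z) := by
        rcases single_outer h₁ h₂ hf hbij hδ₀0 hδ₀lt with ⟨ε, hε, hsmall⟩ | good
        · exact absurd (not_both_small h₁ h₂ hf hbij hδ₀0 hδ₀lt hεi₀ hε hPin₀ hsmall) not_false
        · exact good
      obtain ⟨εo₀, hεo₀, hPout₀⟩ := hout₀
      intro δ hδ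
      rcases le_or_gt δ₀ δ with hle | hlt
      · exact ⟨εo₀, hεo₀, fun z hz hze => lt_of_le_of_lt (by linarith) (hPout₀ z hz hze)⟩
      · rcases single_outer h₁ h₂ hf hbij hδ (by linarith) with ⟨ε, hε, hsmall⟩ | ⟨ε, hε, hlarge⟩
        · exfalso
          obtain ⟨z, hzA, hzgt⟩ := houtpt (min εo₀ ε) (lt_min hεo₀ hε)
          have hz1 : R₁ - εo₀ < Complex.abs z := by
            have h3 := min_le_left (min εo₀ ε) ((R₁-1)/2)
            have h4 := min_le_left εo₀ ε
            linarith
          have hz2 : R₁ - ε < Complex.abs z := by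
            have h3 := min_le_left (min εo₀ ε) ((R₁-1)/2)
            have h4 := min_le_right εo₀ ε
            linarith
          have hlg := hPout₀ z hzA hz1
          have hsm := hsmall z hzA hz2
          rw [hδ₀def] at hlg
          linarith
        · exact ⟨ε, hε, hlarge⟩
  · -- inner maps large
    right
    constructor
    · intro δ hδ
      rcases le_or_gt δ₀ δ with hle | hlt
      · exact ⟨εi₀, hεi₀, fun z hz hze => lt_of_le_of_lt (by linarith) (hQin₀ z hz hze)⟩
      · rcases single_inner h₁ h₂ hf hbij hδ (by linarith) with ⟨ε, hε, hP⟩ | ⟨ε, hε, hQ⟩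
        · exfalso
          obtain ⟨z, hzA, hzlt⟩ := hinpt (min εi₀ ε) (lt_min hεi₀ hε)
          have hz1 : Complex.abs z < 1 + εi₀ := by
            have := min_le_left (min εi₀ ε) ((R₁-1)/2)
            have := min_le_left εi₀ ε
            linarith
          have hz2 : Complex.abs z < 1 + ε := by
            have := min_le_left (min εi₀ ε) ((R₁-1)/2)
            have := min_le_right εi₀ ε
            linarith
          have hlg := hQin₀ z hzA hz1
          have hsm := hP z hzA hz2
          rw [hδ₀def] at hlg
          linarith
        · exact ⟨ε, hε, hQ⟩
    · have hout₀ : ∃ ε, 0 < ε ∧ ∀ z ∈ ann 1 R₁,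
          R₁ - ε < Complex.abs z → Complex.abs (f z) < 1 + δ₀ := by
        rcases single_outer h₁ h₂ hf hbij hδ₀0 hδ₀lt with good | ⟨ε, hε, hlarge⟩
        · exact good
        · exact absurd (not_both_large h₁ h₂ hf hbij hδ₀0 hδ₀lt hεi₀ hε hQin₀ hlarge) not_false
      obtain ⟨εo₀, hεo₀, hQout₀⟩ := hout₀
      intro δ hδ
      rcases le_or_gt δ₀ δ with hle | hlt
      · exact ⟨εo₀, hεo₀, fun z hz hze => lt_of_lt_of_le (hQout₀ z hz hze) (by linarith)⟩
      · rcases single_outer h₁ h₂ hf hbij hδ (by linarith) with ⟨ε, hε, hsmall⟩ | ⟨ε, hε, hlarge⟩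
        · exact ⟨ε, hε, hsmall⟩
        · exfalso
          obtain ⟨z, hzA, hzgt⟩ := houtpt (min εo₀ ε) (lt_min hεo₀ hε)
          have hz1 : R₁ - εo₀ < Complex.abs z := by
            have h3 := min_le_left (min εo₀ ε) ((R₁-1)/2)
            have h4 := min_le_left εo₀ ε
            linarith
          have hz2 : R₁ - ε < Complex.abs z := by
            have h3 := min_le_left (min εo₀ ε) ((R₁-1)/2)
            have h4 := min_le_right εo₀ ε
            linarith
          have hsm := hQout₀ z hzA hz1
          have hlg := hlarge z hzA hz2
          rw [hδ₀def] at hsm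
          linarith




lemma abs_eq_rpow (h₁ : 1 < R₁) (h₂ : 1 < R₂)
    (hf : DifferentiableOn ℂ f (ann 1 R₁))
    (hbij : Set.BijOn f (ann 1 R₁) (ann 1 R₂))
    (Hin : ∀ δ, 0 < δ → ∃ ε, 0 < ε ∧ ∀ z ∈ ann 1 R₁,
      Complex.abs z < 1 + ε → Complex.abs (f z) < 1 + δ)
    (Hout : ∀ δ, 0 < δ → ∃ ε, 0 < ε ∧ ∀ z ∈ ann 1 R₁,
      R₁ - ε < Complex.abs z → R₂ - δ < Complex.abs (f z))
    {z : ℂ} (hz : z ∈ ann 1 R₁) :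
    Complex.abs (f z) = (Complex.abs z) ^ (Real.log R₂ / Real.log R₁) := by
  set r : ℝ := Complex.abs z with hrdef
  have hr1 : 1 < r := hz.1
  have hrR : r < R₁ := hz.2
  set T : ℝ := Real.log r / Real.log R₁ with hTdef
  set δ : ℕ → ℝ := fun n => min (1/(n+1)) ((R₂-1)/2) with hδdef
  have hδpos : ∀ n, 0 < δ n := fun n => lt_min (by positivity) (by linarith)
  have hδle : ∀ n : ℕ, δ n ≤ 1/(n+1) := fun n => min_le_left _ _
  have hδlt : ∀ n, δ n < R₂ - 1 := fun n =>
    lt_of_le_of_lt (min_le_right _ _) (by linarith)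
  have Hin' : ∀ n : ℕ, ∃ ε, 0 < ε ∧ ∀ w ∈ ann 1 R₁,
      Complex.abs w < 1 + ε → Complex.abs (f w) < 1 + δ n := fun n => Hin (δ n) (hδpos n)
  choose εi hεi hPin using Hin'
  have Hout' : ∀ n : ℕ, ∃ ε, 0 < ε ∧ ∀ w ∈ ann 1 R₁,
      R₁ - ε < Complex.abs w → R₂ - δ n < Complex.abs (f w) := fun n => Hout (δ n) (hδpos n)
  choose εo hεo hPout using Hout'
  set m : ℕ → ℝ := fun n => min (min (εi n) (δ n)) ((r-1)/2) with hmdef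
  set m' : ℕ → ℝ := fun n => min (min (εo n) (δ n)) ((R₁-r)/2) with hm'def
  have hmpos : ∀ n, 0 < m n := fun n => lt_min (lt_min (hεi n) (hδpos n)) (by linarith)
  have hm'pos : ∀ n, 0 < m' n := fun n => lt_min (lt_min (hεo n) (hδpos n)) (by linarith)
  have hmεi : ∀ n, m n ≤ εi n := fun n => le_trans (min_le_left _ _) (min_le_left _ _)
  have hmδ : ∀ n, m n ≤ δ n := fun n => le_trans (min_le_left _ _) (min_le_right _ _)
  have hmr : ∀ n, m n ≤ (r-1)/2 := fun n => min_le_right _ _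
  have hm'εo : ∀ n, m' n ≤ εo n := fun n => le_trans (min_le_left _ _) (min_le_left _ _)
  have hm'δ : ∀ n, m' n ≤ δ n := fun n => le_trans (min_le_left _ _) (min_le_right _ _)
  have hm'r : ∀ n, m' n ≤ (R₁-r)/2 := fun n => min_le_right _ _
  set r₁s : ℕ → ℝ := fun n => 1 + m n / 2 with hr₁def
  set r₂s : ℕ → ℝ := fun n => R₁ - m' n / 2 with hr₂def
  have h1n : ∀ n, 1 < r₁s n := fun n => by have := hmpos n; simp only [hr₁def]; linarith
  have hr₁r : ∀ n, r₁s n < r := fun n => by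
    have := hmr n; have := hmpos n; simp only [hr₁def]; linarith
  have hrr₂ : ∀ n, r < r₂s n := fun n => by
    have := hm'r n; have := hm'pos n; simp only [hr₂def]; linarith
  have h2n : ∀ n, r₂s n < R₁ := fun n => by
    have := hm'pos n; simp only [hr₂def]; linarith
  have h12n : ∀ n, r₁s n < r₂s n := fun n => lt_trans (hr₁r n) (hrr₂ n)
  have hfne : ∀ w ∈ ann 1 R₁, f w ≠ 0 := by
    intro w hw hw0
    have := (hbij.mapsTo hw).1
    rw [hw0] at this
    simp at this
    linarith
  have hfabs1 : ∀ w ∈ ann 1 R₁, 1 < Complex.abs (f w) := fun w hw => (hbij.mapsTo hw).1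
  have hfabsR : ∀ w ∈ ann 1 R₁, Complex.abs (f w) ≤ R₂ := fun w hw =>
    le_of_lt (hbij.mapsTo hw).2
  set t : ℕ → ℝ := fun n =>
    (Real.log r - Real.log (r₁s n))/(Real.log (r₂s n) - Real.log (r₁s n)) with htdef
  -- upper bound for each n
  have hupper : ∀ n, Complex.abs (f z) ≤ (1 + δ n) ^ (1 - t n) * R₂ ^ (t n) := by
    intro n
    have ha : ∀ w ∈ ann 1 R₁, Complex.abs w = r₁s n → Complex.abs (f w) ≤ 1 + δ n := by
      intro w hw habs
      apply le_of_lt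
      apply hPin n w hw
      rw [habs, hr₁def]
      have := hmεi n; have := hmpos n
      simp only
      linarith
    exact three_circles hf hfabsR (h1n n) (h12n n) (h2n n) ha
      (fun w hw _ => hfabsR w hw) hz (le_of_lt (hr₁r n)) (le_of_lt (hrr₂ n))
  -- lower bound for each n
  have hlower : ∀ n, (Complex.abs (f z))⁻¹ ≤ 1 ^ (1 - t n) * ((R₂ - δ n)⁻¹) ^ (t n) := by
    intro n
    have hgdiff : DifferentiableOn ℂ (fun w => (f w)⁻¹) (ann 1 R₁) := hf.inv hfne
    have hgB : ∀ w ∈ ann 1 R₁, Complex.abs ((f w)⁻¹) ≤ 1 := by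
      intro w hw
      rw [map_inv₀]
      exact inv_le_one_of_one_le₀ (le_of_lt (hfabs1 w hw))
    have hbb : ∀ w ∈ ann 1 R₁, Complex.abs w = r₂s n →
        Complex.abs ((f w)⁻¹) ≤ (R₂ - δ n)⁻¹ := by
      intro w hw habs
      rw [map_inv₀]
      have h1 : R₂ - δ n < Complex.abs (f w) := by
        apply hPout n w hw
        rw [habs, hr₂def]
        have := hm'εo n; have := hm'pos n
        simp only
        linarith
      have h2 : 0 < R₂ - δ n := by have := hδlt n; linarith
      exact inv_anti₀ h2 (le_of_lt h1)
    have := three_circles hgdiff hgB (h1n n) (h12n n) (h2n n)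
      (fun w hw _ => hgB w hw) hbb hz (le_of_lt (hr₁r n)) (le_of_lt (hrr₂ n))
    rw [map_inv₀] at this
    exact this
  -- limits
  have hδ0 : Tendsto δ atTop (𝓝 0) := by
    apply squeeze_zero (fun n => (hδpos n).le) hδle
    exact tendsto_one_div_add_atTop_nhds_zero_nat
  have hm0 : Tendsto m atTop (𝓝 0) :=
    squeeze_zero (fun n => (hmpos n).le) (fun n => (hmδ n).trans (hδle n))
      tendsto_one_div_add_atTop_nhds_zero_nat
  have hm'0 : Tendsto m' atTop (𝓝 0) :=
    squeeze_zero (fun n => (hm'pos n).le) (fun n => (hm'δ n).trans (hδle n))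
      tendsto_one_div_add_atTop_nhds_zero_nat
  have hr₁lim : Tendsto r₁s atTop (𝓝 1) := by
    have : Tendsto (fun n => 1 + m n / 2) atTop (𝓝 (1 + 0/2)) :=
      tendsto_const_nhds.add (hm0.div_const 2)
    simpa using this
  have hr₂lim : Tendsto r₂s atTop (𝓝 R₁) := by
    have : Tendsto (fun n => R₁ - m' n / 2) atTop (𝓝 (R₁ - 0/2)) :=
      tendsto_const_nhds.sub (hm'0.div_const 2)
    simpa using this
  have hlogr₁ : Tendsto (fun n => Real.log (r₁s n)) atTop (𝓝 0) := by
    have h := (Real.continuousAt_log one_ne_zero).tendsto.comp hr₁lim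
    rwa [Real.log_one] at h
  have hlogr₂ : Tendsto (fun n => Real.log (r₂s n)) atTop (𝓝 (Real.log R₁)) :=
    (Real.continuousAt_log (by linarith)).tendsto.comp hr₂lim
  have hlogR₁ : (0:ℝ) < Real.log R₁ := Real.log_pos h₁
  have htlim : Tendsto t atTop (𝓝 T) := by
    have hnum : Tendsto (fun n => Real.log r - Real.log (r₁s n)) atTop (𝓝 (Real.log r - 0)) :=
      tendsto_const_nhds.sub hlogr₁
    have hden : Tendsto (fun n => Real.log (r₂s n) - Real.log (r₁s n)) atTop
        (𝓝 (Real.log R₁ - 0)) := hlogr₂.sub hlogr₁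
    have := hnum.div hden (by rw [sub_zero]; exact hlogR₁.ne')
    rw [sub_zero, sub_zero] at this; exact this
  have hR₂0 : (0:ℝ) < R₂ := by linarith
  -- upper limit
  have hUlim : Tendsto (fun n => (1 + δ n) ^ (1 - t n) * R₂ ^ (t n)) atTop
      (𝓝 ((1:ℝ) ^ (1 - T) * R₂ ^ T)) := by
    have hbase : Tendsto (fun n => 1 + δ n) atTop (𝓝 (1:ℝ)) := by
      have : Tendsto (fun n => 1 + δ n) atTop (𝓝 (1 + 0)) := tendsto_const_nhds.add hδ0
      simpa using this
    have h1 : Tendsto (fun n => (1 + δ n) ^ (1 - t n)) atTop (𝓝 ((1:ℝ) ^ (1 - T))) :=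
      hbase.rpow (tendsto_const_nhds.sub htlim) (Or.inl one_ne_zero)
    have h2 : Tendsto (fun n => R₂ ^ (t n)) atTop (𝓝 (R₂ ^ T)) :=
      tendsto_const_nhds.rpow htlim (Or.inl hR₂0.ne')
    exact h1.mul h2
  have hub : Complex.abs (f z) ≤ R₂ ^ T := by
    have := ge_of_tendsto' hUlim hupper
    rwa [Real.one_rpow, one_mul] at this
  -- lower limit
  have hVlim : Tendsto (fun n => (1:ℝ) ^ (1 - t n) * ((R₂ - δ n)⁻¹) ^ (t n)) atTop
      (𝓝 ((1:ℝ) ^ (1 - T) * (R₂⁻¹) ^ T)) := by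
    have hbase : Tendsto (fun n => (R₂ - δ n)⁻¹) atTop (𝓝 (R₂⁻¹)) := by
      have h0 : Tendsto (fun n => R₂ - δ n) atTop (𝓝 (R₂ - 0)) := tendsto_const_nhds.sub hδ0
      rw [sub_zero] at h0
      exact h0.inv₀ hR₂0.ne'
    have h1 : Tendsto (fun n => (1:ℝ) ^ (1 - t n)) atTop (𝓝 ((1:ℝ) ^ (1 - T))) :=
      tendsto_const_nhds.rpow (tendsto_const_nhds.sub htlim) (Or.inl one_ne_zero)
    have h2 : Tendsto (fun n => ((R₂ - δ n)⁻¹) ^ (t n)) atTop (𝓝 ((R₂⁻¹) ^ T)) :=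
      hbase.rpow htlim (Or.inl (inv_ne_zero hR₂0.ne'))
    exact h1.mul h2
  have hlb : R₂ ^ T ≤ Complex.abs (f z) := by
    have hle := ge_of_tendsto' hVlim hlower
    rw [Real.one_rpow, one_mul] at hle
    rw [Real.inv_rpow hR₂0.le] at hle
    have hfpos : 0 < Complex.abs (f z) := by
      have := hfabs1 z hz; linarith
    have hrpos : 0 < R₂ ^ T := Real.rpow_pos_of_pos hR₂0 T
    calc R₂ ^ T = ((R₂ ^ T)⁻¹)⁻¹ := (inv_inv _).symm
      _ ≤ ((Complex.abs (f z))⁻¹)⁻¹ := by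
          apply inv_anti₀ (by positivity) hle
      _ = Complex.abs (f z) := inv_inv _
  have heq : Complex.abs (f z) = R₂ ^ T := le_antisymm hub hlb
  rw [heq, hTdef]
  rw [Real.rpow_def_of_pos hR₂0, Real.rpow_def_of_pos (by linarith : (0:ℝ) < r)]
  congr 1
  field_simp




lemma sin_ne_zero_of_mem {θ : ℝ} (h1 : -Real.pi < θ) (h2 : θ < Real.pi) (h0 : θ ≠ 0) :
    Real.sin θ ≠ 0 := by
  intro hs
  rcases Real.sin_eq_zero_iff.mp hs with ⟨n, hn⟩
  have hpi := Real.pi_pos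
  have hn1 : (-1:ℝ) < (n:ℝ) := by nlinarith
  have hn2 : ((n:ℝ)) < 1 := by nlinarith
  have h1' : (-1:ℤ) < n := by exact_mod_cast hn1
  have h2' : (n:ℤ) < 1 := by exact_mod_cast hn2
  have : n = 0 := by omega
  rw [this] at hn
  simp at hn
  exact h0 hn.symm

/-- points x·exp(θi) with θ ∈ (-π,π), θ ≠ 0, 1 < x < R₁, lie in the slit annulus,
and their log is the obvious one. -/
lemma mem_sann_polar {x θ : ℝ} (hx1 : 1 < x) (hxR : x < R₁)
    (hθ1 : -Real.pi < θ) (hθ2 : θ < Real.pi) (hθ0 : θ ≠ 0) :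
    (x : ℂ) * Complex.exp (θ * Complex.I) ∈ sann 1 R₁ ∧
    Complex.log ((x : ℂ) * Complex.exp (θ * Complex.I))
      = (Real.log x : ℂ) + θ * Complex.I := by
  have hx0 : (0:ℝ) < x := by linarith
  have hexp : (x : ℂ) * Complex.exp (θ * Complex.I)
      = Complex.exp ((Real.log x : ℂ) + θ * Complex.I) := by
    rw [Complex.exp_add]
    congr 1
    rw [← Complex.ofReal_exp, Real.exp_log hx0]
  have him : ((Real.log x : ℂ) + θ * Complex.I).im = θ := by simp
  have hlog : Complex.log ((x : ℂ) * Complex.exp (θ * Complex.I))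
      = (Real.log x : ℂ) + θ * Complex.I := by
    rw [hexp, Complex.log_exp (by rw [him]; exact hθ1) (by rw [him]; linarith)]
  have habs : Complex.abs ((x : ℂ) * Complex.exp (θ * Complex.I)) = x := by
    rw [map_mul, Complex.abs_exp]
    simp only [Complex.abs_ofReal, abs_of_pos hx0]
    have : ((θ:ℂ) * Complex.I).re = 0 := by simp
    rw [this, Real.exp_zero, mul_one]
  refine ⟨⟨⟨by rw [habs]; exact hx1, by rw [habs]; exact hxR⟩, ?_⟩, hlog⟩
  rw [Complex.mem_slitPlane_iff]
  right
  have : ((x : ℂ) * Complex.exp (θ * Complex.I)).im = x * Real.sin θ := by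
    rw [Complex.mul_im]
    simp [Complex.exp_ofReal_mul_I_im, Complex.exp_ofReal_mul_I_re]
  rw [this]
  exact mul_ne_zero (by positivity) (sin_ne_zero_of_mem hθ1 hθ2 hθ0)

lemma rigidity (h₁ : 1 < R₁) (h₂ : 1 < R₂)
    (hf : DifferentiableOn ℂ f (ann 1 R₁))
    (hinj : Set.InjOn f (ann 1 R₁))
    (hfne : ∀ z ∈ ann 1 R₁, f z ≠ 0)
    (habs : ∀ z ∈ ann 1 R₁, Complex.abs (f z)
      = (Complex.abs z) ^ (Real.log R₂ / Real.log R₁)) :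
    R₁ = R₂ := by
  set α : ℝ := Real.log R₂ / Real.log R₁ with hαdef
  have hα0 : 0 < α := div_pos (Real.log_pos h₂) (Real.log_pos h₁)
  set U : Set ℂ := sann 1 R₁ with hUdef
  have hUsub : U ⊆ ann 1 R₁ := inter_subset_left
  set φ : ℂ → ℂ := fun z => f z * Complex.exp (-(α:ℂ) * Complex.log z) with hφdef
  have hφdiff : DifferentiableOn ℂ φ U := by
    apply DifferentiableOn.mul (hf.mono hUsub)
    intro z hz
    exact (((Complex.differentiableAt_log hz.2).const_mul (-(α:ℂ))).cexp).differentiableWithinAt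
  have hφabs : ∀ z ∈ U, Complex.abs (φ z) = 1 := by
    intro z hz
    have hz0 : (0:ℝ) < Complex.abs z := by
      have := (hUsub hz).1; linarith
    rw [hφdef]
    simp only [map_mul, Complex.abs_exp]
    rw [habs z (hUsub hz)]
    have hre : (-(α:ℂ) * Complex.log z).re = -α * Real.log (Complex.abs z) := by
      simp [Complex.log_re, Complex.abs_apply]
    rw [hre]
    rw [Real.rpow_def_of_pos hz0]
    rw [← Real.exp_add]
    rw [show Real.log (Complex.abs z) * α + -α * Real.log (Complex.abs z) = 0 by ring,
      Real.exp_zero]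
  -- φ is constant on U
  have hφan : AnalyticOnNhd ℂ φ U := hφdiff.analyticOnNhd (isOpen_sann 1 R₁)
  set x : ℝ := (1 + R₁)/2 with hxdef
  have hx1 : 1 < x := by rw [hxdef]; linarith
  have hxR : x < R₁ := by rw [hxdef]; linarith
  have hx0 : (0:ℝ) < x := by linarith
  have hx₀U : ((x:ℝ):ℂ) ∈ U := by
    constructor
    · constructor <;> rw [Complex.abs_ofReal, abs_of_pos hx0] <;> assumption
    · rw [Complex.mem_slitPlane_iff]; left; simpa using hx0
  have hconst : ∃ c : ℂ, ∀ z ∈ U, φ z = c := by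
    rcases hφan.is_constant_or_isOpen (isPreconnected_sann 1 R₁ one_pos (by linarith))
      with h | hopen
    · exact h
    · exfalso
      have hVopen : IsOpen (φ '' U) := hopen U (subset_refl U) (isOpen_sann 1 R₁)
      have hw₀ : φ ((x:ℝ):ℂ) ∈ φ '' U := ⟨_, hx₀U, rfl⟩
      obtain ⟨s, hs0, hball⟩ := Metric.isOpen_iff.mp hVopen _ hw₀
      set u : ℝ := min (s/2) (1/2) with hu
      have hu0 : 0 < u := lt_min (by linarith) (by norm_num)
      have habsw₀ : Complex.abs (φ ((x:ℝ):ℂ)) = 1 := hφabs _ hx₀U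
      have hw' : (1 + u) * φ ((x:ℝ):ℂ) ∈ Metric.ball (φ ((x:ℝ):ℂ)) s := by
        rw [Metric.mem_ball, dist_eq]
        have : (1 + (u:ℂ)) * φ ((x:ℝ):ℂ) - φ ((x:ℝ):ℂ) = (u:ℂ) * φ ((x:ℝ):ℂ)  := by ring
        rw [show ((1:ℂ) + u) * φ ((x:ℝ):ℂ) - φ ((x:ℝ):ℂ) = (u:ℂ) * φ ((x:ℝ):ℂ) by ring]
        rw [Complex.norm_eq_abs, map_mul, habsw₀, mul_one, Complex.abs_ofReal, abs_of_pos hu0]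
        exact lt_of_le_of_lt (min_le_left _ _) (by linarith)
      obtain ⟨z', hz'U, hz'⟩ := hball hw'
      have h1 : Complex.abs (φ z') = 1 := hφabs _ hz'U
      rw [hz', map_mul, habsw₀, mul_one] at h1
      have : Complex.abs ((1:ℂ) + u) = 1 + u := by
        rw [show ((1:ℂ) + u) = (((1 + u : ℝ)):ℂ) by push_cast; ring,
          Complex.abs_ofReal, abs_of_pos (by linarith)]
      rw [this] at h1
      linarith
  obtain ⟨c, hc⟩ := hconst
  have hc0 : c ≠ 0 := by
    intro h
    have := hφabs _ hx₀U
    rw [hc _ hx₀U, h] at this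
    simp at this
  have hfU : ∀ z ∈ U, f z = c * Complex.exp ((α:ℂ) * Complex.log z) := by
    intro z hz
    have h : f z * Complex.exp (-(α:ℂ) * Complex.log z) = c := hc z hz
    have hexp : Complex.exp (-(α:ℂ) * Complex.log z)
        * Complex.exp ((α:ℂ) * Complex.log z) = 1 := by
      rw [← Complex.exp_add]
      rw [show -(α:ℂ) * Complex.log z + (α:ℂ) * Complex.log z = 0 by ring, Complex.exp_zero]
    calc f z = f z * (Complex.exp (-(α:ℂ) * Complex.log z)
          * Complex.exp ((α:ℂ) * Complex.log z)) := by rw [hexp, mul_one]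
      _ = (f z * Complex.exp (-(α:ℂ) * Complex.log z))
          * Complex.exp ((α:ℂ) * Complex.log z) := by ring
      _ = c * Complex.exp ((α:ℂ) * Complex.log z) := by rw [h]
  -- limit formula across the slit
  have hmx : -((x:ℝ):ℂ) ∈ ann 1 R₁ := by
    constructor <;> rw [map_neg_eq_map, Complex.abs_ofReal, abs_of_pos hx0] <;> assumption
  have hcontf : ContinuousAt f (-((x:ℝ):ℂ)) :=
    hf.continuousOn.continuousAt ((isOpen_ann 1 R₁).mem_nhds hmx)
  have hlimit : ∀ σ : ℝ, σ = 1 ∨ σ = -1 →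
      f (-((x:ℝ):ℂ)) = c * Complex.exp ((α:ℂ) * ((Real.log x : ℂ) + (σ * Real.pi) * Complex.I)) := by
    intro σ hσ
    set θ : ℕ → ℝ := fun k => σ * (Real.pi - ((k:ℝ)+1)⁻¹) with hθdef
    have hπ := Real.pi_pos
    have hπ3 := Real.pi_gt_three
    have hθmem : ∀ k : ℕ, -Real.pi < θ k ∧ θ k < Real.pi ∧ θ k ≠ 0 := by
      intro k
      have hk1 : (0:ℝ) < ((k:ℝ)+1)⁻¹ := by positivity
      have hk2 : ((k:ℝ)+1)⁻¹ ≤ 1 := by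
        rw [inv_le_one_iff₀]; right; linarith [Nat.cast_nonneg (α := ℝ) k]
      rcases hσ with h | h <;> rw [hθdef, h] <;>
        refine ⟨by nlinarith, by nlinarith, by nlinarith⟩
    have hmem := fun k => mem_sann_polar (R₁ := R₁) hx1 hxR (hθmem k).1 (hθmem k).2.1 (hθmem k).2.2
    have hθlim : Tendsto θ atTop (𝓝 (σ * Real.pi)) := by
      have h0 : Tendsto (fun k : ℕ => ((k:ℝ)+1)⁻¹) atTop (𝓝 0) := by
        have := tendsto_one_div_add_atTop_nhds_zero_nat (𝕜 := ℝ)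
        simpa [one_div] using this
      have : Tendsto (fun k : ℕ => σ * (Real.pi - ((k:ℝ)+1)⁻¹)) atTop (𝓝 (σ * (Real.pi - 0))) :=
        tendsto_const_nhds.mul (tendsto_const_nhds.sub h0)
      simpa using this
    -- sequence of points
    set zseq : ℕ → ℂ := fun k => (x : ℂ) * Complex.exp ((θ k : ℂ) * Complex.I) with hzseq
    have hzlim : Tendsto zseq atTop (𝓝 (-((x:ℝ):ℂ))) := by
      have hneg : (x : ℂ) * Complex.exp (((σ * Real.pi : ℝ) : ℂ) * Complex.I) = -((x:ℝ):ℂ) := by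
        rcases hσ with h | h <;> rw [h]
        · push_cast
          rw [one_mul, Complex.exp_pi_mul_I]; ring
        · push_cast
          rw [show (-1:ℂ) * Real.pi * Complex.I = -((Real.pi:ℂ) * Complex.I) by ring,
            Complex.exp_neg, Complex.exp_pi_mul_I, inv_neg, inv_one]
          ring
      rw [← hneg]
      apply Tendsto.const_mul
      apply (Complex.continuous_exp.tendsto _).comp
      have := ((Complex.continuous_ofReal.tendsto _).comp hθlim)
      exact this.mul_const Complex.I
    have hfseq : ∀ k, f (zseq k)
        = c * Complex.exp ((α:ℂ) * ((Real.log x : ℂ) + (θ k : ℂ) * Complex.I)) := by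
      intro k
      rw [hzseq]
      rw [hfU _ (hmem k).1, (hmem k).2]
    have hL1 : Tendsto (fun k => f (zseq k)) atTop (𝓝 (f (-((x:ℝ):ℂ)))) :=
      hcontf.tendsto.comp hzlim
    have hL2 : Tendsto (fun k => f (zseq k)) atTop
        (𝓝 (c * Complex.exp ((α:ℂ) * ((Real.log x : ℂ) + ((σ * Real.pi : ℝ) : ℂ) * Complex.I)))) := by
      simp only [hfseq]
      apply Tendsto.const_mul
      apply (Complex.continuous_exp.tendsto _).comp
      apply Tendsto.const_mul
      apply Tendsto.const_add
      exact (((Complex.continuous_ofReal.tendsto _).comp hθlim)).mul_const Complex.I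
    have := tendsto_nhds_unique hL1 hL2
    rw [this]
    norm_cast
  -- derive α ∈ ℤ
  have e1 := hlimit 1 (Or.inl rfl)
  have e2 := hlimit (-1) (Or.inr rfl)
  rw [e1] at e2
  have hAB := mul_left_cancel₀ hc0 e2
  rw [Complex.exp_eq_exp_iff_exists_int] at hAB
  obtain ⟨n, hn⟩ := hAB
  push_cast at hn
  have hαn : (α : ℂ) = n := by
    have hπI : ((Real.pi:ℂ)) * Complex.I ≠ 0 := by
      apply mul_ne_zero _ Complex.I_ne_zero
      exact_mod_cast Real.pi_ne_zero
    have hkey : (α:ℂ) * (2 * ((Real.pi:ℂ) * Complex.I))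
        = (n:ℂ) * (2 * ((Real.pi:ℂ) * Complex.I)) := by
      linear_combination hn
    have h2 : (2 : ℂ) * ((Real.pi:ℂ) * Complex.I) ≠ 0 := mul_ne_zero two_ne_zero hπI
    exact mul_right_cancel₀ h2 hkey
  have hαr : α = (n : ℝ) := by exact_mod_cast hαn
  have hn1 : 1 ≤ n := by
    by_contra hcon
    push_neg at hcon
    have : (n:ℝ) ≤ 0 := by exact_mod_cast (by omega : n ≤ 0)
    rw [hαr] at hα0
    linarith
  -- rule out n ≥ 2
  have hx₀ann : ((x:ℝ):ℂ) ∈ ann 1 R₁ := hUsub hx₀U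
  have hfx : f ((x:ℝ):ℂ) = c * Complex.exp ((α:ℂ) * (Real.log x : ℂ)) := by
    rw [hfU _ hx₀U, Complex.ofReal_log hx0.le]
  have hn2 : n < 2 := by
    by_contra hcon
    push_neg at hcon
    rcases Int.even_or_odd n with heven | hodd
    · -- f(-x) = f(x), contradiction with injectivity
      have hval := hlimit 1 (Or.inl rfl)
      have hsplit : (α:ℂ) * ((Real.log x : ℂ) + ((1:ℝ):ℂ) * (Real.pi:ℂ) * Complex.I)
          = (α:ℂ) * (Real.log x : ℂ) + (n:ℂ) * ((Real.pi:ℂ) * Complex.I) := by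
        rw [hαn]; push_cast; ring
      rw [hsplit, Complex.exp_add, Complex.exp_int_mul, Complex.exp_pi_mul_I,
        heven.neg_one_zpow, mul_one] at hval
      rw [← hfx] at hval
      have heq : -((x:ℝ):ℂ) = ((x:ℝ):ℂ) := hinj hmx hx₀ann hval
      have hre := congrArg Complex.re heq
      simp only [Complex.neg_re, Complex.ofReal_re] at hre
      linarith
    · -- n odd, n ≥ 3; use the point x * exp(2π/n I)
      have hn3 : 3 ≤ n := by
        rcases hodd with ⟨k, hk⟩; omega
      have hn0 : (0:ℝ) < (n:ℝ) := by exact_mod_cast (by omega : (0:ℤ) < n)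
      have hπ := Real.pi_pos
      set θ : ℝ := 2 * Real.pi / n with hθdef
      have hθ0 : 0 < θ := by positivity
      have hθπ : θ < Real.pi := by
        rw [hθdef, div_lt_iff₀ hn0]
        have : (3:ℝ) ≤ (n:ℝ) := by exact_mod_cast hn3
        nlinarith
      obtain ⟨hp₃U, hp₃log⟩ := mem_sann_polar (R₁ := R₁) hx1 hxR
        (by linarith) hθπ (ne_of_gt hθ0)
      set p₃ : ℂ := (x : ℂ) * Complex.exp ((θ:ℂ) * Complex.I) with hp₃
      have hfp₃ : f p₃ = c * Complex.exp ((α:ℂ) * (Real.log x : ℂ)) := by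
        rw [hfU _ hp₃U, hp₃log]
        congr 1
        have hsplit : (α:ℂ) * ((Real.log x : ℂ) + (θ:ℂ) * Complex.I)
            = (α:ℂ) * (Real.log x : ℂ) + (α:ℂ) * (θ:ℂ) * Complex.I := by ring
        rw [hsplit, Complex.exp_add]
        have hαθ : (α:ℂ) * (θ:ℂ) = 2 * Real.pi := by
          rw [hαn, hθdef]
          have hnC : ((n:ℤ):ℂ) ≠ 0 := Int.cast_ne_zero.mpr (by omega)
          push_cast
          field_simp
        rw [hαθ, Complex.exp_two_pi_mul_I, mul_one]
      rw [← hfx] at hfp₃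
      have heq : p₃ = ((x:ℝ):ℂ) := hinj (hUsub hp₃U) hx₀ann hfp₃
      -- but p₃ has nonzero argument
      have harg : Complex.log p₃ = (Real.log x : ℂ) + (θ:ℂ) * Complex.I := hp₃log
      have him1 : (Complex.log p₃).im = θ := by rw [harg]; simp
      have him2 : (Complex.log ((x:ℝ):ℂ)).im = 0 := by
        rw [← Complex.ofReal_log hx0.le]; simp
      rw [heq, him2] at him1
      exact (ne_of_gt hθ0) him1.symm
  have hne1 : n = 1 := by omega
  -- conclude
  have hα1 : α = 1 := by rw [hαr, hne1]; norm_num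
  have hlogeq : Real.log R₂ = Real.log R₁ := by
    have hlogR₁ : Real.log R₁ ≠ 0 := (Real.log_pos h₁).ne'
    rw [hαdef] at hα1
    field_simp at hα1
    linarith
  calc R₁ = Real.exp (Real.log R₁) := (Real.exp_log (by linarith)).symm
    _ = Real.exp (Real.log R₂) := by rw [hlogeq]
    _ = R₂ := Real.exp_log (by linarith)



variable {R₁ R₂ : ℝ} {f : ℂ → ℂ} in
/-- Conformal invariance of the modulus of an annulus. -/
theorem annulus_modulus_conformal_invariant (R₁ R₂ : ℝ) (h₁ : 1 < R₁) (h₂ : 1 < R₂)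
    (h : ∃ f : ℂ → ℂ,
      DifferentiableOn ℂ f {z : ℂ | 1 < ‖z‖ ∧ ‖z‖ < R₁} ∧
      Set.BijOn f {z : ℂ | 1 < ‖z‖ ∧ ‖z‖ < R₁}
        {z : ℂ | 1 < ‖z‖ ∧ ‖z‖ < R₂}) :
    R₁ = R₂ := by
  obtain ⟨f, hdf, hbij⟩ := h
  have hdf' : DifferentiableOn ℂ f (ann 1 R₁) := hdf
  have hbij' : Set.BijOn f (ann 1 R₁) (ann 1 R₂) := hbij
  have hR₂0 : (0:ℝ) < R₂ := by linarith
  have hfne : ∀ z ∈ ann 1 R₁, f z ≠ 0 := by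
    intro z hz h0
    have := (hbij'.mapsTo hz).1
    rw [h0] at this
    simp at this
    linarith
  rcases dichotomy h₁ h₂ hdf' hbij' with ⟨Hin, Hout⟩ | ⟨Qin, Qout⟩
  · exact rigidity h₁ h₂ hdf' hbij'.injOn hfne
      (fun z hz => abs_eq_rpow h₁ h₂ hdf' hbij' Hin Hout hz)
  · -- compose with w ↦ R₂ / w
    set g : ℂ → ℂ := fun z => (R₂ : ℂ) / f z with hg
    have hR₂C : ((R₂:ℝ):ℂ) ≠ 0 := by exact_mod_cast hR₂0.ne'
    have habsg : ∀ z ∈ ann 1 R₁, Complex.abs (g z) = R₂ / Complex.abs (f z) := by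
      intro z hz
      rw [hg]
      simp only [map_div₀, Complex.abs_ofReal, abs_of_pos hR₂0]
    have hgmaps : ∀ z ∈ ann 1 R₁, g z ∈ ann 1 R₂ := by
      intro z hz
      have h1 := (hbij'.mapsTo hz).1
      have h2 := (hbij'.mapsTo hz).2
      have hfpos : 0 < Complex.abs (f z) := by linarith
      constructor
      · rw [habsg z hz]
        rw [lt_div_iff₀ hfpos]
        linarith
      · rw [habsg z hz]
        rw [div_lt_iff₀ hfpos]
        nlinarith
    have hgdiff : DifferentiableOn ℂ g (ann 1 R₁) := by
      exact (differentiableOn_const _).div hdf' hfne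
    have hgbij : Set.BijOn g (ann 1 R₁) (ann 1 R₂) := by
      refine ⟨hgmaps, ?_, ?_⟩
      · intro z hz w hw hzw
        apply hbij'.injOn hz hw
        rw [hg] at hzw
        simp only at hzw
        field_simp [hfne z hz, hfne w hw, hR₂C] at hzw
        exact hzw.symm
      · intro w hw
        have hw0 : w ≠ 0 := by
          intro h0
          rw [h0] at hw
          simp [ann] at hw
          linarith [hw.1]
        have hσw : (R₂:ℂ)/w ∈ ann 1 R₂ := by
          have habs : Complex.abs ((R₂:ℂ)/w) = R₂ / Complex.abs w := by
            simp only [map_div₀, Complex.abs_ofReal, abs_of_pos hR₂0]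
          have h1 := hw.1
          have h2 := hw.2
          have hwpos : 0 < Complex.abs w := by linarith
          constructor
          · rw [habs, lt_div_iff₀ hwpos]; linarith
          · rw [habs, div_lt_iff₀ hwpos]; nlinarith
        obtain ⟨z, hzA, hfz⟩ := hbij'.surjOn hσw
        refine ⟨z, hzA, ?_⟩
        rw [hg]
        simp only
        rw [hfz]
        rw [div_div_eq_mul_div, mul_comm, mul_div_assoc, div_self hR₂C, mul_one]
    -- boundary behaviour for g
    have Hin' : ∀ δ, 0 < δ → ∃ ε, 0 < ε ∧ ∀ z ∈ ann 1 R₁,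
        Complex.abs z < 1 + ε → Complex.abs (g z) < 1 + δ := by
      intro δ hδ
      rcases lt_or_ge δ (R₂ - 1) with hcase | hcase
      · obtain ⟨ε, hε, hQ⟩ := Qin δ hδ
        refine ⟨ε, hε, fun z hz hze => ?_⟩
        have hQz := hQ z hz hze
        have hfpos : 0 < Complex.abs (f z) := by
          have := (hbij'.mapsTo hz).1; linarith
        rw [habsg z hz, div_lt_iff₀ hfpos]
        nlinarith
      · obtain ⟨ε, hε, hQ⟩ := Qin 1 one_pos
        refine ⟨ε, hε, fun z hz hze => ?_⟩
        have h1 := (hbij'.mapsTo hz).1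
        have hfpos : 0 < Complex.abs (f z) := by linarith
        rw [habsg z hz, div_lt_iff₀ hfpos]
        nlinarith
    have Hout' : ∀ δ, 0 < δ → ∃ ε, 0 < ε ∧ ∀ z ∈ ann 1 R₁,
        R₁ - ε < Complex.abs z → R₂ - δ < Complex.abs (g z) := by
      intro δ hδ
      set δ' : ℝ := δ / (2 * R₂) with hδ'def
      have hδ'0 : 0 < δ' := by rw [hδ'def]; positivity
      obtain ⟨ε, hε, hQ⟩ := Qout δ' hδ'0
      refine ⟨ε, hε, fun z hz hze => ?_⟩
      have hQz := hQ z hz hze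
      have h1 := (hbij'.mapsTo hz).1
      have hfpos : 0 < Complex.abs (f z) := by linarith
      rw [habsg z hz, lt_div_iff₀ hfpos]
      have hkey : δ' * R₂ = δ/2 := by
        rw [hδ'def]; field_simp
      rcases le_or_gt (R₂ - δ) 0 with hle | hpos
      · nlinarith [mul_nonneg (neg_nonneg.mpr hle) hfpos.le]
      · have hmul := mul_lt_mul_of_pos_left hQz hpos
        nlinarith [mul_pos hδ'0 hδ]
    exact rigidity h₁ h₂ hgdiff hgbij.injOn
      (fun z hz => by
        intro h0
        have := (hgmaps z hz).1
        rw [h0] at this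
        simp at this
        linarith)
      (fun z hz => abs_eq_rpow h₁ h₂ hgdiff hgbij Hin' Hout' hz)


end AnnulusProof
end

section
/- There is no holomorphic bijection from the punctured disk {z : 0 < |z| < 1} onto any annulus {z : r < |z| < 1} with 0 < r < 1. -/
open Set Metric Filter Function Topology

/-- The punctured unit disk is not conformally equivalent to any nondegenerate
annulus. -/
theorem punctured_disk_not_equiv_annulus (r : ℝ) (hr0 : 0 < r) (hr1 : r < 1) :
    ¬ ∃ f : ℂ → ℂ,
      DifferentiableOn ℂ f {z : ℂ | 0 < ‖z‖ ∧ ‖z‖ < 1} ∧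
      Set.BijOn f {z : ℂ | 0 < ‖z‖ ∧ ‖z‖ < 1}
        {z : ℂ | r < ‖z‖ ∧ ‖z‖ < 1} := by
  rintro ⟨f, hdf, hbij⟩
  set S : Set ℂ := {z : ℂ | 0 < ‖z‖ ∧ ‖z‖ < 1} with hSdef
  set A : Set ℂ := {z : ℂ | r < ‖z‖ ∧ ‖z‖ < 1} with hAdef
  have hSball : S = Metric.ball (0:ℂ) 1 \ {0} := by
    ext z
    simp [hSdef, Complex.dist_eq, norm_pos_iff, and_comm]
  -- extend f across 0
  set F : ℂ → ℂ := Function.update f 0 (limUnder (𝓝[≠] (0:ℂ)) f) with hFdef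
  have hb : BddAbove (norm ∘ f '' (Metric.ball (0:ℂ) 1 \ {0})) := by
    refine ⟨1, ?_⟩
    rintro x ⟨z, hz, rfl⟩
    rw [← hSball] at hz
    exact le_of_lt (hbij.mapsTo hz).2
  have hF : DifferentiableOn ℂ F (Metric.ball (0:ℂ) 1) := by
    refine Complex.differentiableOn_update_limUnder_of_bddAbove
      (Metric.isOpen_ball.mem_nhds (by simp)) ?_ hb
    rw [← hSball]; exact hdf
  have hFS : ∀ z ∈ S, F z = f z := by
    intro z hz
    have : z ≠ 0 := by
      intro h; rw [hSball] at hz; exact hz.2 (by simp [h])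
    simp [hFdef, Function.update_of_ne this]
  have hanal : AnalyticOnNhd ℂ F (Metric.ball (0:ℂ) 1) :=
    hF.analyticOnNhd Metric.isOpen_ball
  -- open mapping
  have hopen : ∀ s ⊆ Metric.ball (0:ℂ) 1, IsOpen s → IsOpen (F '' s) := by
    rcases hanal.is_constant_or_isOpen ((convex_ball (0:ℂ) 1).isPreconnected) with ⟨v, hv⟩ | h
    · exfalso
      have ha : (1/2 : ℂ) ∈ S := by constructor <;> norm_num
      have hbmem : (Complex.I/2 : ℂ) ∈ S := by constructor <;> norm_num
      have h1 : f (1/2 : ℂ) = v := by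
        rw [← hFS _ ha]; exact hv _ (by rw [hSball] at ha; exact ha.1)
      have h2 : f (Complex.I/2 : ℂ) = v := by
        rw [← hFS _ hbmem]; exact hv _ (by rw [hSball] at hbmem; exact hbmem.1)
      have := hbij.injOn ha hbmem (h1.trans h2.symm)
      have : (1 : ℂ) = Complex.I := by
        field_simp at this; exact this
      simp [Complex.ext_iff] at this
    · exact h
  -- F is continuous at 0 and tendsto along S
  have h0mem : (0:ℂ) ∈ Metric.ball (0:ℂ) 1 := by simp
  have hcont : ContinuousAt F 0 :=
    (hF.differentiableAt (Metric.isOpen_ball.mem_nhds h0mem)).continuousAt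
  have hnhds : 𝓝[S] (0:ℂ) = 𝓝[≠] (0:ℂ) := by
    rw [hSball, Set.diff_eq, Set.inter_comm]
    exact nhdsWithin_inter_of_mem' (mem_nhdsWithin_of_mem_nhds
      (Metric.isOpen_ball.mem_nhds h0mem))
  have hne : (𝓝[S] (0:ℂ)).NeBot := by rw [hnhds]; infer_instance
  have htend : Tendsto (fun z => ‖F z‖) (𝓝[S] 0)
      (𝓝 (‖F 0‖)) :=
    (continuous_norm.continuousAt.comp hcont).tendsto.mono_left nhdsWithin_le_nhds
  have hevr : ∀ᶠ z in 𝓝[S] (0:ℂ), r ≤ ‖F z‖ := by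
    filter_upwards [eventually_mem_nhdsWithin] with z hz
    rw [hFS z hz]; exact le_of_lt (hbij.mapsTo hz).1
  have hev1 : ∀ᶠ z in 𝓝[S] (0:ℂ), ‖F z‖ ≤ 1 := by
    filter_upwards [eventually_mem_nhdsWithin] with z hz
    rw [hFS z hz]; exact le_of_lt (hbij.mapsTo hz).2
  have hrF : r ≤ ‖F 0‖ := ge_of_tendsto htend hevr
  have hF1 : ‖F 0‖ ≤ 1 := le_of_tendsto htend hev1

  have hF0ne : F 0 ≠ 0 := by
    intro h
    rw [h, norm_zero] at hrF
    linarith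
  by_cases hmid : r < ‖F 0‖ ∧ ‖F 0‖ < 1
  · -- F 0 lies in the open annulus: contradiction with injectivity
    obtain ⟨w₀, hw₀S, hw₀⟩ := hbij.surjOn hmid
    set ρ := ‖w₀‖ with hρ
    have hρ0 : 0 < ρ := hw₀S.1
    have hρ1 : ρ < 1 := hw₀S.2
    set δ := min (ρ/2) ((1 - ρ)/2) with hδ
    have hδ0 : 0 < δ := lt_min (by linarith) (by linarith)
    have hδρ : δ ≤ ρ/2 := min_le_left _ _
    have hδ1 : δ ≤ (1-ρ)/2 := min_le_right _ _
    have hsub_s : Metric.ball (0:ℂ) (ρ/2) ⊆ Metric.ball 0 1 :=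
      Metric.ball_subset_ball (by linarith)
    have ht_sub_S : Metric.ball w₀ δ ⊆ S := by
      intro z hz
      rw [Metric.mem_ball, Complex.dist_eq] at hz
      have h1 : ‖w₀‖ - ‖z‖ ≤ ‖z - w₀‖ := by
        have := norm_sub_norm_le w₀ z
        rw [norm_sub_rev] at this
        simpa using this
      have h2 : ‖z‖ - ‖w₀‖ ≤ ‖z - w₀‖ := by
        have := norm_sub_norm_le z w₀
        simpa using this
      constructor
      · have : ρ - δ ≤ ‖z‖ := by rw [hρ] at *; linarith
        linarith
      · have : ‖z‖ ≤ ρ + δ := by rw [hρ] at *; linarith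
        linarith
    have ht_sub_ball : Metric.ball w₀ δ ⊆ Metric.ball 0 1 := by
      intro z hz
      have := ht_sub_S hz
      rw [hSball] at this
      exact this.1
    have hdisj : ∀ z, z ∈ Metric.ball (0:ℂ) (ρ/2) → z ∉ Metric.ball w₀ δ := by
      intro z h1 h2
      rw [Metric.mem_ball, Complex.dist_eq, sub_zero] at h1
      rw [Metric.mem_ball, Complex.dist_eq] at h2
      have h3 : ‖w₀‖ - ‖z‖ ≤ ‖z - w₀‖ := by
        have := norm_sub_norm_le w₀ z
        rw [norm_sub_rev] at this
        simpa using this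
      rw [← hρ] at h3
      linarith
    have hO1 : IsOpen (F '' Metric.ball (0:ℂ) (ρ/2)) := hopen _ hsub_s Metric.isOpen_ball
    have hO2 : IsOpen (F '' Metric.ball w₀ δ) := hopen _ ht_sub_ball Metric.isOpen_ball
    have hmem1 : F 0 ∈ F '' Metric.ball (0:ℂ) (ρ/2) :=
      ⟨0, Metric.mem_ball_self (by linarith), rfl⟩
    have hmem2 : F 0 ∈ F '' Metric.ball w₀ δ :=
      ⟨w₀, Metric.mem_ball_self hδ0, by rw [hFS w₀ hw₀S, hw₀]⟩
    obtain ⟨ε, hε0, hεsub⟩ := Metric.isOpen_iff.1 (hO1.inter hO2) _ ⟨hmem1, hmem2⟩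
    set v : ℂ := F 0 + ((ε/2 : ℝ) : ℂ) with hv
    have hvne : v ≠ F 0 := by
      intro h
      have : ((ε/2 : ℝ) : ℂ) = 0 := by
        have := congrArg (fun x => x - F 0) h
        simpa [hv] using this
      rw [Complex.ofReal_eq_zero] at this
      linarith
    have hvmem : v ∈ F '' Metric.ball (0:ℂ) (ρ/2) ∩ F '' Metric.ball w₀ δ := by
      apply hεsub
      rw [Metric.mem_ball, Complex.dist_eq]
      have : v - F 0 = ((ε/2 : ℝ) : ℂ) := by rw [hv]; ring
      rw [this, Complex.norm_real, Real.norm_eq_abs, abs_of_pos (by linarith)]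
      linarith
    obtain ⟨⟨z₁, hz₁, hz₁v⟩, ⟨z₂, hz₂, hz₂v⟩⟩ := hvmem
    have hz₁0 : z₁ ≠ 0 := by
      intro h
      exact hvne (by rw [← hz₁v, h])
    have hz₁S : z₁ ∈ S := by
      rw [hSball]
      exact ⟨hsub_s hz₁, by simp [hz₁0]⟩
    have hz₂S : z₂ ∈ S := ht_sub_S hz₂
    have heq : z₁ = z₂ :=
      hbij.injOn hz₁S hz₂S (by rw [← hFS _ hz₁S, ← hFS _ hz₂S, hz₁v, hz₂v])
    exact hdisj z₁ hz₁ (heq ▸ hz₂)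
  · -- F 0 on the boundary of the annulus: contradiction with openness
    have himg : F '' Metric.ball (0:ℂ) 1 ⊆ A ∪ {F 0} := by
      rintro _ ⟨z, hz, rfl⟩
      by_cases hz0 : z = 0
      · right; simp [hz0]
      · left
        have hzS : z ∈ S := by rw [hSball]; exact ⟨hz, hz0⟩
        rw [hFS z hzS]
        exact hbij.mapsTo hzS
    have hOb : IsOpen (F '' Metric.ball (0:ℂ) 1) := hopen _ subset_rfl Metric.isOpen_ball
    obtain ⟨ε, hε0, hεsub⟩ := Metric.isOpen_iff.1 hOb _ ⟨0, h0mem, rfl⟩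
    set a := ‖F 0‖ with ha
    have ha0 : 0 < a := lt_of_lt_of_le hr0 hrF
    rcases not_and_or.1 hmid with h | h
    · push_neg at h  -- a ≤ r
      set δ := min (ε/(2*a)) (1/2) with hδ
      have hδ0 : 0 < δ := lt_min (by positivity) (by norm_num)
      have hδ1 : δ < 1 := lt_of_le_of_lt (min_le_right _ _) (by norm_num)
      have hδε : δ ≤ ε/(2*a) := min_le_left _ _
      set w : ℂ := F 0 * ((1 - δ : ℝ) : ℂ) with hw
      have hwa : ‖w‖ = a * (1 - δ) := by
        rw [hw, norm_mul, Complex.norm_real, Real.norm_eq_abs, abs_of_pos (by linarith), ha]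
      have hwlt : ‖w‖ < a := by
        rw [hwa]
        nlinarith
      have hdist : w ∈ Metric.ball (F 0) ε := by
        rw [Metric.mem_ball, Complex.dist_eq]
        have : w - F 0 = F 0 * (((1 - δ : ℝ) : ℂ) - 1) := by rw [hw]; ring
        rw [this, norm_mul, ← ha]
        have h2 : ‖((1 - δ : ℝ) : ℂ) - 1‖ = δ := by
          have : ((1 - δ : ℝ) : ℂ) - 1 = ((-δ : ℝ) : ℂ) := by push_cast; ring
          rw [this, Complex.norm_real, Real.norm_eq_abs, abs_of_neg (by linarith)]
          ring
        rw [h2]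
        have : a * δ ≤ a * (ε/(2*a)) := by
          apply mul_le_mul_of_nonneg_left hδε (le_of_lt ha0)
        have h3 : a * (ε/(2*a)) = ε/2 := by field_simp
        linarith [h3 ▸ this]
      rcases himg (hεsub hdist) with hwA | hwF
      · have : r < ‖w‖ := hwA.1
        linarith
      · rw [Set.mem_singleton_iff] at hwF
        rw [hwF] at hwlt
        exact lt_irrefl _ hwlt
    · push_neg at h  -- 1 ≤ a
      set δ := ε/(2*a) with hδ
      have hδ0 : 0 < δ := by positivity
      set w : ℂ := F 0 * ((1 + δ : ℝ) : ℂ) with hw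
      have hwa : ‖w‖ = a * (1 + δ) := by
        rw [hw, norm_mul, Complex.norm_real, Real.norm_eq_abs, abs_of_pos (by linarith), ha]
      have hwgt : a < ‖w‖ := by
        rw [hwa]
        nlinarith
      have hdist : w ∈ Metric.ball (F 0) ε := by
        rw [Metric.mem_ball, Complex.dist_eq]
        have : w - F 0 = F 0 * (((1 + δ : ℝ) : ℂ) - 1) := by rw [hw]; ring
        rw [this, norm_mul, ← ha]
        have h2 : ‖((1 + δ : ℝ) : ℂ) - 1‖ = δ := by
          have : ((1 + δ : ℝ) : ℂ) - 1 = ((δ : ℝ) : ℂ) := by push_cast; ring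
          rw [this, Complex.norm_real, Real.norm_eq_abs, abs_of_pos hδ0]
        rw [h2]
        have h3 : a * δ = ε/2 := by rw [hδ]; field_simp
        linarith
      rcases himg (hεsub hdist) with hwA | hwF
      · have : ‖w‖ < 1 := hwA.2
        linarith
      · rw [Set.mem_singleton_iff] at hwF
        rw [hwF] at hwgt
        exact lt_irrefl _ hwgt
end
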